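/- arXiv:1011.1443 — 2 statements merged into one kernel-verified Lean document; each statement's English description precedes it below -/
import Mathlib

section
/- If every component of a graph H is a path or a subdivision of the claw K_{1,3}, then for every graph G, H is a minor of G if and only if H is a subgraph of G. -/
open SimpleGraph

/-- The degree of a vertex: the cardinality of its neighbor set. -/
noncomputable def degN (G : SimpleGraph ℕ) (v : ℕ) : ℕ := (G.neighborSet v).ncard

/-- An edge of `G` is *internal* if it lies on a cycle or on a path joining two
vertices of degree at least 3. -/
def InternalEdge (G : SimpleGraph ℕ) (e : Sym2 ℕ) : Prop :=
  e ∈ G.edgeSet ∧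
    ((∃ (v : ℕ) (c : G.Walk v v), c.IsCycle ∧ e ∈ c.edges) ∨
     (∃ (a b : ℕ) (p : G.Walk a b), p.IsPath ∧ e ∈ p.edges ∧
        3 ≤ degN G a ∧ 3 ≤ degN G b))

/-- `beta G` is the number of internal edges of `G`. -/
noncomputable def beta (G : SimpleGraph ℕ) : ℕ := {e | InternalEdge G e}.ncard

/-- `G` is obtained from `H` by one elementary subdivision: an edge `(u,v)` is
replaced by the two edges `(u,w)`, `(w,v)`, where `w` is a fresh (isolated)
vertex. -/
def ElemSubdiv (H G : SimpleGraph ℕ) : Prop :=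
  ∃ u v w : ℕ, H.Adj u v ∧ H.neighborSet w = ∅ ∧ w ≠ u ∧ w ≠ v ∧
    G = SimpleGraph.fromEdgeSet ((H.edgeSet \ {s(u, v)}) ∪ {s(u, w), s(w, v)})

/-- `G` is a subdivision of `H` if it is obtained from `H` by finitely many
elementary subdivisions. -/
def IsSubdivision (H G : SimpleGraph ℕ) : Prop := Relation.ReflTransGen ElemSubdiv H G

/-- `H` is (isomorphic to) a subgraph of `G`: there is an injective graph
homomorphism `H →g G`. -/
def SubgraphOf {V W : Type*} (H : SimpleGraph V) (G : SimpleGraph W) : Prop :=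
  ∃ f : H →g G, Function.Injective f

/-- `H` is a topological minor of `G`: some subdivision of `H` is a subgraph of `G`. -/
def TopMinorOf (H G : SimpleGraph ℕ) : Prop :=
  ∃ H' : SimpleGraph ℕ, IsSubdivision H H' ∧ SubgraphOf H' G

/-- `H` is a minor of `G`: there are pairwise disjoint nonempty connected branch
sets in `G`, one for each vertex of `H`, with an edge of `G` between the branch
sets of any two adjacent vertices of `H`. -/
def MinorOf {V W : Type*} (H : SimpleGraph V) (G : SimpleGraph W) : Prop :=
  ∃ φ : V → Set W,
    (∀ v, (φ v).Nonempty) ∧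
    (∀ v, (G.induce (φ v)).Connected) ∧
    (∀ u v, u ≠ v → Disjoint (φ u) (φ v)) ∧
    (∀ u v, H.Adj u v → ∃ a ∈ φ u, ∃ b ∈ φ v, G.Adj a b)

/-- The star `K_{1,r}` on vertex set `ℕ`: center `0` adjacent to `1, …, r`. -/
def starN (r : ℕ) : SimpleGraph ℕ :=
  SimpleGraph.fromEdgeSet {e | ∃ i : ℕ, 1 ≤ i ∧ i ≤ r ∧ e = s(0, i)}

section Helpers

namespace SimpleGraph.Walk
variable {V : Type*} {G : SimpleGraph V}

lemma exists_path_in_set {s : Set V} (hs : (G.induce s).Connected)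
    {a b : V} (ha : a ∈ s) (hb : b ∈ s) :
    ∃ p : G.Walk a b, p.IsPath ∧ ∀ x ∈ p.support, x ∈ s := by
  haveI := Classical.decEq V
  obtain ⟨w⟩ := hs.preconnected ⟨a, ha⟩ ⟨b, hb⟩
  let f : G.induce s →g G := ⟨Subtype.val, fun h => h⟩
  refine ⟨(w.map f).bypass, Walk.bypass_isPath _, fun x hx => ?_⟩
  have hx' := Walk.support_bypass_subset _ hx
  rw [Walk.support_map] at hx'
  obtain ⟨y, _, rfl⟩ := List.mem_map.mp hx'
  exact y.2

lemma IsPath.append_of_inter {u v w : V} {p : G.Walk u v} {q : G.Walk v w}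
    (hp : p.IsPath) (hq : q.IsPath) (hint : ∀ x, x ∈ p.support → x ∈ q.support → x = v) :
    (p.append q).IsPath := by
  rw [Walk.isPath_def, Walk.support_append, List.nodup_append]
  refine ⟨hp.support_nodup, hq.support_nodup.sublist (List.tail_sublist _), ?_⟩
  intro x hxp y hxq hxy
  subst hxy
  have hx : x ∈ q.support := List.mem_of_mem_tail hxq
  have := hint x hxp hx
  subst this
  have := hq.support_nodup
  rw [q.support_eq_cons] at this
  exact (List.nodup_cons.mp this).1 hxq

lemma IsPath.concat_of_not_mem {u v w : V} {p : G.Walk u v} (hp : p.IsPath)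
    (h : G.Adj v w) (hw : w ∉ p.support) : (p.concat h).IsPath := by
  rw [Walk.isPath_def, Walk.support_concat, List.nodup_append]
  refine ⟨hp.support_nodup, List.nodup_singleton _, ?_⟩
  intro x hxp y hxw
  rw [List.mem_singleton] at hxw
  subst hxw; exact fun h => hw (h ▸ hxp)

lemma chain_path (B : ℕ → Set V) (n : ℕ)
    (hconn : ∀ j, j ≤ n → (G.induce (B j)).Connected)
    (hdisj : ∀ j j', j ≤ n → j' ≤ n → j ≠ j' → Disjoint (B j) (B j'))
    (hedge : ∀ j, j < n → ∃ a ∈ B j, ∃ b ∈ B (j+1), G.Adj a b)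
    (x : V) (hx : x ∈ B 0) :
    ∃ y, ∃ p : G.Walk x y, p.IsPath ∧ y ∈ B n ∧
      (∀ v ∈ p.support, ∃ j, j ≤ n ∧ v ∈ B j) ∧
      (∀ j, j ≤ n → ∃ v ∈ p.support, v ∈ B j) ∧
      (∃ z, ∃ q : G.Walk x z, ∃ r : G.Walk z y, p = q.append r ∧
        (∀ v ∈ r.support, v ∈ B n) ∧ (∀ v ∈ q.support, v ≠ z → v ∉ B n)) := by
  induction n with
  | zero =>
    refine ⟨x, Walk.nil, Walk.IsPath.nil, hx, ?_, ?_, x, Walk.nil, Walk.nil, rfl, ?_, ?_⟩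
    · intro v hv; simp only [Walk.support_nil, List.mem_singleton] at hv
      exact ⟨0, le_refl 0, hv ▸ hx⟩
    · intro j hj; interval_cases j; exact ⟨x, by simp, hx⟩
    · intro v hv; simp only [Walk.support_nil, List.mem_singleton] at hv; exact hv ▸ hx
    · intro v hv hne; simp only [Walk.support_nil, List.mem_singleton] at hv; exact absurd hv hne
  | succ n ih =>
    obtain ⟨y, p, hp, hyBn, hsub, hhit, z, q, r, hpqr, hrBn, hqBn⟩ :=
      ih (fun j hj => hconn j (le_trans hj (Nat.le_succ n)))
        (fun j j' hj hj' => hdisj j j' (le_trans hj (Nat.le_succ n)) (le_trans hj' (Nat.le_succ n)))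
        (fun j hj => hedge j (lt_trans hj (Nat.lt_succ_self n)))
    obtain ⟨a, haBn, b, hbB, hab⟩ := hedge n (Nat.lt_succ_self n)
    obtain ⟨π, hπ, hπsub⟩ := exists_path_in_set (hconn n (Nat.le_succ n)) hyBn haBn
    haveI := Classical.decEq V
    -- path from z to a inside B n
    set r' : G.Walk z a := (r.append π).bypass with hr'
    have hr'path : r'.IsPath := Walk.bypass_isPath _
    have hr'sub : ∀ v ∈ r'.support, v ∈ B n := by
      intro v hv
      have := Walk.support_bypass_subset _ hv
      rw [Walk.mem_support_append_iff] at this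
      rcases this with h | h
      · exact hrBn v h
      · exact hπsub v h
    have hqpath : q.IsPath := by rw [hpqr] at hp; exact hp.of_append_left
    have hq'path : (q.append r').IsPath := by
      apply hqpath.append_of_inter hr'path
      intro w hwq hwr'
      by_contra hne
      exact hqBn w hwq hne (hr'sub w hwr')
    have hqsub : ∀ v ∈ q.support, ∃ j, j ≤ n ∧ v ∈ B j := by
      intro v hv
      exact hsub v (by rw [hpqr, Walk.mem_support_append_iff]; exact Or.inl hv)
    have hq'sub : ∀ v ∈ (q.append r').support, ∃ j, j ≤ n ∧ v ∈ B j := by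
      intro v hv
      rw [Walk.mem_support_append_iff] at hv
      rcases hv with h | h
      · exact hqsub v h
      · exact ⟨n, le_refl n, hr'sub v h⟩
    have hbnot : b ∉ (q.append r').support := by
      intro hb'
      obtain ⟨j, hj, hvb⟩ := hq'sub b hb'
      exact Set.disjoint_left.mp
        (hdisj j (n+1) (le_trans hj (Nat.le_succ n)) (le_refl _) (by omega)) hvb hbB
    refine ⟨b, (q.append r').concat hab, hq'path.concat_of_not_mem hab hbnot, hbB, ?_, ?_,
      b, (q.append r').concat hab, Walk.nil, (Walk.append_nil _).symm, ?_, ?_⟩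
    · intro v hv
      rw [Walk.support_concat, List.mem_append, List.mem_singleton] at hv
      rcases hv with h | rfl
      · obtain ⟨j, hj, hvj⟩ := hq'sub v h
        exact ⟨j, by omega, hvj⟩
      · exact ⟨n+1, le_refl _, hbB⟩
    · intro j hj
      have hmem : ∀ w, w ∈ (q.append r').support → w ∈ ((q.append r').concat hab).support := by
        intro w hw
        rw [Walk.support_concat, List.mem_append]; exact Or.inl hw
      rcases Nat.lt_or_ge j (n+1) with hjn | hjn
      · have hjn' : j ≤ n := by omega
        obtain ⟨v, hvp, hvB⟩ := hhit j hjn'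
        rw [hpqr, Walk.mem_support_append_iff] at hvp
        rcases hvp with h | h
        · exact ⟨v, hmem v (by rw [Walk.mem_support_append_iff]; exact Or.inl h), hvB⟩
        · -- v ∈ r.support ⊆ B n, so j = n; use a instead
          have hvn : v ∈ B n := hrBn v h
          have hj_eq : j = n := by
            by_contra hne
            exact Set.disjoint_left.mp (hdisj j n (by omega) (Nat.le_succ n) hne) hvB hvn
          subst hj_eq
          refine ⟨a, hmem a ?_, haBn⟩
          rw [Walk.mem_support_append_iff]
          exact Or.inr (Walk.end_mem_support _)
      · have : j = n + 1 := by omega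
        subst this
        refine ⟨b, ?_, hbB⟩
        rw [Walk.support_concat, List.mem_append, List.mem_singleton]
        exact Or.inr rfl
    · intro v hv; simp only [Walk.support_nil, List.mem_singleton] at hv; exact hv ▸ hbB
    · intro v hv hne
      rw [Walk.support_concat, List.mem_append, List.mem_singleton] at hv
      rcases hv with h | rfl
      · obtain ⟨j, hj, hvj⟩ := hq'sub v h
        intro hvB
        exact Set.disjoint_left.mp
          (hdisj j (n+1) (by omega) (le_refl _) (by omega)) hvj hvB
      · exact absurd rfl hne

lemma IsPath.getVert_inj {u v : V} {p : G.Walk u v} (hp : p.IsPath) {i j : ℕ}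
    (hi : i ≤ p.length) (hj : j ≤ p.length) (h : p.getVert i = p.getVert j) : i = j := by
  induction p generalizing i j with
  | nil => simp at hi hj; omega
  | cons ha q ih =>
    rw [Walk.cons_isPath_iff] at hp
    cases i with
    | zero =>
      cases j with
      | zero => rfl
      | succ m =>
        exfalso
        simp only [Walk.getVert] at h
        exact hp.2 (h ▸ getVert_mem_support q m)
    | succ n =>
      cases j with
      | zero =>
        exfalso
        simp only [Walk.getVert] at h
        exact hp.2 (h ▸ getVert_mem_support q n)
      | succ m =>
        simp only [Walk.getVert] at h
        simp only [Walk.length_cons, Nat.succ_le_succ_iff] at hi hj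
        exact congrArg Nat.succ (ih hp.1 hi hj h)

lemma le_length_of_hits {u v : V} {p : G.Walk u v} (hp : p.IsPath) (B : ℕ → Set V) (n : ℕ)
    (hdisj : ∀ j j', j ≤ n → j' ≤ n → j ≠ j' → Disjoint (B j) (B j'))
    (hhit : ∀ j ≤ n, ∃ x ∈ p.support, x ∈ B j) : n ≤ p.length := by
  haveI := Classical.decEq V
  choose f hf1 hf2 using hhit
  have key : (Finset.range (n+1)).card ≤ p.support.toFinset.card := by
    apply Finset.card_le_card_of_injOn (fun j => if h : j ≤ n then f j h else v)
    · intro j hj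
      rw [Finset.mem_coe, Finset.mem_range] at hj
      have hj' : j ≤ n := by omega
      simp only [dif_pos hj', Finset.mem_coe, List.mem_toFinset]
      exact hf1 j hj'
    · intro j hj j' hj' heq
      rw [Finset.mem_coe, Finset.mem_range] at hj hj'
      have h1 : j ≤ n := by omega
      have h2 : j' ≤ n := by omega
      dsimp only at heq
      rw [dif_pos h1, dif_pos h2] at heq
      by_contra hne
      exact Set.disjoint_left.mp (hdisj j j' h1 h2 hne) (hf2 j h1) (heq ▸ hf2 j' h2)
  rw [Finset.card_range, List.toFinset_card_of_nodup hp.support_nodup,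
    Walk.length_support] at key
  omega

lemma exists_first_hit' {u v : V} (p : G.Walk u v) (S : Set V) (hv : v ∈ S) :
    ∃ x, x ∈ S ∧ ∃ q : G.Walk u x, (∀ w ∈ q.support, w ∈ S → w = x) ∧
      (∀ w ∈ q.support, w ∈ p.support) := by
  induction p with
  | nil => exact ⟨_, hv, Walk.nil, by simp +contextual, by simp⟩
  | @cons a b c h q ih =>
    by_cases ha : a ∈ S
    · exact ⟨a, ha, Walk.nil, by simp +contextual, by simp⟩
    · obtain ⟨x, hxS, r, hr1, hr2⟩ := ih hv
      refine ⟨x, hxS, Walk.cons h r, ?_, ?_⟩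
      · intro w hw hwS
        rw [Walk.support_cons, List.mem_cons] at hw
        rcases hw with rfl | hw
        · exact absurd hwS ha
        · exact hr1 w hw hwS
      · intro w hw
        rw [Walk.support_cons, List.mem_cons] at hw
        rw [Walk.support_cons, List.mem_cons]
        rcases hw with rfl | hw
        · exact Or.inl rfl
        · exact Or.inr (hr2 w hw)


lemma median {B : Set V} (hB : (G.induce B).Connected) {a₀ a₁ a₂ : V}
    (h₀ : a₀ ∈ B) (h₁ : a₁ ∈ B) (h₂ : a₂ ∈ B) :
    ∃ x, x ∈ B ∧ ∃ (P₀ : G.Walk x a₀) (P₁ : G.Walk x a₁) (P₂ : G.Walk x a₂),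
      P₀.IsPath ∧ P₁.IsPath ∧ P₂.IsPath ∧
      (∀ v ∈ P₀.support, v ∈ B) ∧ (∀ v ∈ P₁.support, v ∈ B) ∧ (∀ v ∈ P₂.support, v ∈ B) ∧
      (∀ v, v ∈ P₀.support → v ∈ P₁.support → v = x) ∧
      (∀ v, v ∈ P₀.support → v ∈ P₂.support → v = x) ∧
      (∀ v, v ∈ P₁.support → v ∈ P₂.support → v = x) := by
  haveI := Classical.decEq V
  obtain ⟨p, hp, hpB⟩ := exists_path_in_set hB h₀ h₁
  obtain ⟨q, hq, hqB⟩ := exists_path_in_set hB h₂ h₀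
  obtain ⟨x, hxp, q', hq'1, hq'2⟩ :=
    exists_first_hit' q {v | v ∈ p.support} (p.start_mem_support)
  have hxB : x ∈ B := hpB x hxp
  set q'' := q'.bypass with hq''
  have hq''path : q''.IsPath := Walk.bypass_isPath _
  have hq''sub : ∀ w ∈ q''.support, w ∈ q'.support := fun w hw =>
    Walk.support_bypass_subset _ hw
  set t := p.takeUntil x hxp with ht
  set d := p.dropUntil x hxp with hd
  have hspec : t.append d = p := Walk.take_spec p hxp
  have htd : ∀ v, v ∈ t.support → v ∈ d.support → v = x := by
    intro v hvt hvd
    by_contra hne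
    have hnodup : (t.append d).support.Nodup := by rw [hspec]; exact hp.support_nodup
    rw [Walk.support_append, List.nodup_append] at hnodup
    have hvd' : v ∈ d.support.tail := by
      rw [d.support_eq_cons] at hvd
      rcases List.mem_cons.mp hvd with rfl | h
      · exact absurd rfl hne
      · exact h
    exact hnodup.2.2 v hvt v hvd' rfl
  have htsub : ∀ v ∈ t.support, v ∈ p.support := fun v h => Walk.support_takeUntil_subset _ _ h
  have hdsub : ∀ v ∈ d.support, v ∈ p.support := fun v h => Walk.support_dropUntil_subset _ _ h
  refine ⟨x, hxB, t.reverse, d, q''.reverse, (hp.takeUntil hxp).reverse, hp.dropUntil hxp,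
    hq''path.reverse, ?_, ?_, ?_, ?_, ?_, ?_⟩
  · intro v hv; rw [Walk.support_reverse, List.mem_reverse] at hv; exact hpB v (htsub v hv)
  · intro v hv; exact hpB v (hdsub v hv)
  · intro v hv
    rw [Walk.support_reverse, List.mem_reverse] at hv
    exact hqB v (hq'2 v (hq''sub v hv))
  · intro v hv1 hv2
    rw [Walk.support_reverse, List.mem_reverse] at hv1
    exact htd v hv1 hv2
  · intro v hv1 hv2
    rw [Walk.support_reverse, List.mem_reverse] at hv1 hv2
    exact hq'1 v (hq''sub v hv2) (htsub v hv1)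
  · intro v hv1 hv2
    rw [Walk.support_reverse, List.mem_reverse] at hv2
    exact hq'1 v (hq''sub v hv2) (hdsub v hv1)

end SimpleGraph.Walk

section ArmClaw
namespace SimpleGraph.Walk
variable {V : Type*} {G : SimpleGraph V}

lemma arm_construct {B : Set V} {x a : V} (P : G.Walk x a) (hP : P.IsPath)
    (hPB : ∀ v ∈ P.support, v ∈ B) (ℓ : ℕ) (hℓ : 1 ≤ ℓ) (C : ℕ → Set V)
    (hconn : ∀ j, j < ℓ → (G.induce (C j)).Connected)
    (hdisjBC : ∀ j, j < ℓ → Disjoint B (C j))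
    (hdisjCC : ∀ j j', j < ℓ → j' < ℓ → j ≠ j' → Disjoint (C j) (C j'))
    {b : V} (hb : b ∈ C 0) (hab : G.Adj a b)
    (hedge : ∀ j, j + 1 < ℓ → ∃ a' ∈ C j, ∃ b' ∈ C (j+1), G.Adj a' b') :
    ∃ y, ∃ arm : G.Walk x y, arm.IsPath ∧ ℓ ≤ arm.length ∧
      (∀ v ∈ arm.support, v ∈ P.support ∨ ∃ j, j < ℓ ∧ v ∈ C j) := by
  obtain ⟨y, ch, hch, _, hchsub, hchhit, _⟩ :=
    chain_path C (ℓ - 1) (fun j hj => hconn j (by omega))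
      (fun j j' hj hj' => hdisjCC j j' (by omega) (by omega))
      (fun j hj => hedge j (by omega)) b hb
  have hchB : ∀ v ∈ ch.support, ∃ j, j < ℓ ∧ v ∈ C j := by
    intro v hv
    obtain ⟨j, hj, hvj⟩ := hchsub v hv
    exact ⟨j, by omega, hvj⟩
  have hchlen : ℓ - 1 ≤ ch.length :=
    le_length_of_hits hch C (ℓ - 1)
      (fun j j' hj hj' => hdisjCC j j' (by omega) (by omega)) hchhit
  have hanotch : a ∉ ch.support := by
    intro h
    obtain ⟨j, hj, hvj⟩ := hchB a h
    exact Set.disjoint_left.mp (hdisjBC j hj) (hPB a (Walk.end_mem_support _)) hvj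
  have hconspath : (Walk.cons hab ch).IsPath := by
    rw [Walk.cons_isPath_iff]
    refine ⟨hch, ?_⟩
    intro h
    obtain ⟨j, hj, hvj⟩ := hchB a h
    exact Set.disjoint_left.mp (hdisjBC j hj) (hPB a (Walk.end_mem_support _)) hvj
  have harm : (P.append (Walk.cons hab ch)).IsPath := by
    apply hP.append_of_inter hconspath
    intro w hwP hwc
    rw [Walk.support_cons, List.mem_cons] at hwc
    rcases hwc with rfl | hwc
    · rfl
    · exfalso
      obtain ⟨j, hj, hvj⟩ := hchB w hwc
      exact Set.disjoint_left.mp (hdisjBC j hj) (hPB w hwP) hvj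
  refine ⟨y, P.append (Walk.cons hab ch), harm, ?_, ?_⟩
  · rw [Walk.length_append, Walk.length_cons]; omega
  · intro v hv
    rw [Walk.mem_support_append_iff] at hv
    rcases hv with h | h
    · exact Or.inl h
    · rw [Walk.support_cons, List.mem_cons] at h
      rcases h with rfl | h
      · exact Or.inl (Walk.end_mem_support _)
      · exact Or.inr (hchB v h)

lemma claw_embed {B : Set V} (ℓ : Fin 3 → ℕ) (C : Fin 3 → ℕ → Set V)
    (hℓ : ∀ i, 1 ≤ ℓ i)
    (hBconn : (G.induce B).Connected)
    (hCconn : ∀ i j, j < ℓ i → (G.induce (C i j)).Connected)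
    (hdisjBC : ∀ i j, j < ℓ i → Disjoint B (C i j))
    (hdisjCC : ∀ i j i' j', j < ℓ i → j' < ℓ i' → ¬(i = i' ∧ j = j') →
      Disjoint (C i j) (C i' j'))
    (hedge0 : ∀ i, ∃ a ∈ B, ∃ b ∈ C i 0, G.Adj a b)
    (hedge : ∀ i j, j + 1 < ℓ i → ∃ a ∈ C i j, ∃ b ∈ C i (j+1), G.Adj a b) :
    ∃ x, x ∈ B ∧ ∃ y₀ y₁ y₂, ∃ (A₀ : G.Walk x y₀) (A₁ : G.Walk x y₁) (A₂ : G.Walk x y₂),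
      A₀.IsPath ∧ A₁.IsPath ∧ A₂.IsPath ∧
      ℓ 0 ≤ A₀.length ∧ ℓ 1 ≤ A₁.length ∧ ℓ 2 ≤ A₂.length ∧
      (∀ v ∈ A₀.support, v ∈ B ∨ ∃ j, j < ℓ 0 ∧ v ∈ C 0 j) ∧
      (∀ v ∈ A₁.support, v ∈ B ∨ ∃ j, j < ℓ 1 ∧ v ∈ C 1 j) ∧
      (∀ v ∈ A₂.support, v ∈ B ∨ ∃ j, j < ℓ 2 ∧ v ∈ C 2 j) ∧
      (∀ v, v ∈ A₀.support → v ∈ A₁.support → v = x) ∧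
      (∀ v, v ∈ A₀.support → v ∈ A₂.support → v = x) ∧
      (∀ v, v ∈ A₁.support → v ∈ A₂.support → v = x) := by
  choose aa haa bb hbb hab using hedge0
  obtain ⟨x, hxB, P₀, P₁, P₂, hP₀, hP₁, hP₂, hP₀B, hP₁B, hP₂B, h01, h02, h12⟩ :=
    median hBconn (haa 0) (haa 1) (haa 2)
  obtain ⟨y₀, A₀, hA₀, hlen₀, hsub₀⟩ :=
    arm_construct P₀ hP₀ hP₀B (ℓ 0) (hℓ 0) (C 0) (hCconn 0) (hdisjBC 0)
      (fun j j' hj hj' hne => hdisjCC 0 j 0 j' hj hj' (fun h => hne h.2)) (hbb 0) (hab 0)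
      (hedge 0)
  obtain ⟨y₁, A₁, hA₁, hlen₁, hsub₁⟩ :=
    arm_construct P₁ hP₁ hP₁B (ℓ 1) (hℓ 1) (C 1) (hCconn 1) (hdisjBC 1)
      (fun j j' hj hj' hne => hdisjCC 1 j 1 j' hj hj' (fun h => hne h.2)) (hbb 1) (hab 1)
      (hedge 1)
  obtain ⟨y₂, A₂, hA₂, hlen₂, hsub₂⟩ :=
    arm_construct P₂ hP₂ hP₂B (ℓ 2) (hℓ 2) (C 2) (hCconn 2) (hdisjBC 2)
      (fun j j' hj hj' hne => hdisjCC 2 j 2 j' hj hj' (fun h => hne h.2)) (hbb 2) (hab 2)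
      (hedge 2)
  have key : ∀ (i i' : Fin 3) (Pi : G.Walk x (aa i)) (Pi' : G.Walk x (aa i')), i ≠ i' →
      (∀ v ∈ Pi.support, v ∈ B) → (∀ v ∈ Pi'.support, v ∈ B) →
      (∀ v, v ∈ Pi.support → v ∈ Pi'.support → v = x) →
      ∀ v, (v ∈ Pi.support ∨ ∃ j, j < ℓ i ∧ v ∈ C i j) →
        (v ∈ Pi'.support ∨ ∃ j, j < ℓ i' ∧ v ∈ C i' j) → v = x := by
    intro i i' Pi Pi' hne hPiB hPi'B hPP v hv hv'
    rcases hv with hv | ⟨j, hj, hvj⟩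
    · rcases hv' with hv' | ⟨j', hj', hvj'⟩
      · exact hPP v hv hv'
      · exact absurd (hPiB v hv) (fun h => Set.disjoint_left.mp (hdisjBC i' j' hj') h hvj')
    · rcases hv' with hv' | ⟨j', hj', hvj'⟩
      · exact absurd (hPi'B v hv') (fun h => Set.disjoint_left.mp (hdisjBC i j hj) h hvj)
      · exact absurd hvj (fun h => Set.disjoint_left.mp
          (hdisjCC i j i' j' hj hj' (fun hh => hne hh.1)) h hvj')
  have hsub₀' : ∀ v ∈ A₀.support, v ∈ B ∨ ∃ j, j < ℓ 0 ∧ v ∈ C 0 j := by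
    intro v hv
    rcases hsub₀ v hv with h | h
    · exact Or.inl (hP₀B v h)
    · exact Or.inr h
  have hsub₁' : ∀ v ∈ A₁.support, v ∈ B ∨ ∃ j, j < ℓ 1 ∧ v ∈ C 1 j := by
    intro v hv
    rcases hsub₁ v hv with h | h
    · exact Or.inl (hP₁B v h)
    · exact Or.inr h
  have hsub₂' : ∀ v ∈ A₂.support, v ∈ B ∨ ∃ j, j < ℓ 2 ∧ v ∈ C 2 j := by
    intro v hv
    rcases hsub₂ v hv with h | h
    · exact Or.inl (hP₂B v h)
    · exact Or.inr h
  refine ⟨x, hxB, y₀, y₁, y₂, A₀, A₁, A₂, hA₀, hA₁, hA₂, hlen₀, hlen₁, hlen₂,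
    hsub₀', hsub₁', hsub₂', ?_, ?_, ?_⟩
  · exact fun v hv hv' => key 0 1 P₀ P₁ (by decide) hP₀B hP₁B h01 v (hsub₀ v hv) (hsub₁ v hv')
  · exact fun v hv hv' => key 0 2 P₀ P₂ (by decide) hP₀B hP₂B h02 v (hsub₀ v hv) (hsub₂ v hv')
  · exact fun v hv hv' => key 1 2 P₁ P₂ (by decide) hP₁B hP₂B h12 v (hsub₁ v hv) (hsub₂ v hv')
end SimpleGraph.Walk
end ArmClaw

def SpiderData (K : SimpleGraph ℕ) (ℓ : Fin 3 → ℕ) (A : Fin 3 → ℕ → ℕ) : Prop :=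
  (∀ i, 1 ≤ ℓ i) ∧
  (∀ i i', A i 0 = A i' 0) ∧
  (∀ i j i' j', j ≤ ℓ i → j' ≤ ℓ i' → A i j = A i' j' → (i = i' ∧ j = j') ∨ (j = 0 ∧ j' = 0)) ∧
  (∀ u v, K.Adj u v ↔ ∃ i j, j < ℓ i ∧
    ((u = A i j ∧ v = A i (j+1)) ∨ (v = A i j ∧ u = A i (j+1))))

lemma spider_base : SpiderData (starN 3) (fun _ => 1) (fun i j => if j = 0 then 0 else (i : ℕ) + 1) := by
  refine ⟨fun _ => le_refl 1, fun i i' => rfl, ?_, ?_⟩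
  · intro i j i' j' hj hj' heq
    dsimp only at hj hj' heq
    interval_cases j <;> interval_cases j'
    · exact Or.inr ⟨rfl, rfl⟩
    · exfalso; simp at heq
    · exfalso; simp at heq
    · norm_num at heq
      exact Or.inl ⟨Fin.ext (by omega), rfl⟩
  · intro u v
    constructor
    · intro h
      rw [starN, fromEdgeSet_adj] at h
      obtain ⟨⟨k, hk1, hk3, he⟩, hne⟩ := h
      rw [Sym2.eq_iff] at he
      refine ⟨⟨k - 1, by omega⟩, 0, by norm_num, ?_⟩
      have : (((⟨k - 1, by omega⟩ : Fin 3) : ℕ)) + 1 = k := by simp; omega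
      rcases he with ⟨rfl, rfl⟩ | ⟨rfl, rfl⟩
      · left; simp [this]
      · right; simp [this]
    · rintro ⟨i, j, hj, h⟩
      dsimp only at hj
      have hj0 : j = 0 := by omega
      subst hj0
      rw [starN, fromEdgeSet_adj]
      rcases h with ⟨rfl, rfl⟩ | ⟨rfl, rfl⟩ <;>
        exact ⟨⟨(i : ℕ) + 1, by omega, by omega, by simp⟩, by simp⟩

section SpiderStep
open SimpleGraph

lemma SpiderData.mem_support {K : SimpleGraph ℕ} {ℓ A} (h : SpiderData K ℓ A) (x : ℕ) :
    x ∈ K.support ↔ ∃ i j, j ≤ ℓ i ∧ x = A i j := by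
  obtain ⟨hℓ, hcen, hinj, hadj⟩ := h
  constructor
  · rintro ⟨y, hy⟩
    have hy : K.Adj x y := hy
    rw [hadj] at hy
    obtain ⟨i, j, hj, h⟩ := hy
    rcases h with ⟨rfl, _⟩ | ⟨_, rfl⟩
    · exact ⟨i, j, by omega, rfl⟩
    · exact ⟨i, j+1, by omega, rfl⟩
  · rintro ⟨i, j, hj, rfl⟩
    by_cases hlt : j < ℓ i
    · exact ⟨A i (j+1), (hadj _ _).mpr ⟨i, j, hlt, Or.inl ⟨rfl, rfl⟩⟩⟩
    · have hj' : j = ℓ i := by omega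
      refine ⟨A i (j-1), (hadj _ _).mpr ⟨i, j-1, by have := hℓ i; omega, Or.inr ⟨rfl, ?_⟩⟩⟩
      congr 1
      have := hℓ i; omega

lemma SpiderData.w_ne {K : SimpleGraph ℕ} {ℓ A} (h : SpiderData K ℓ A) {w : ℕ}
    (hw : K.neighborSet w = ∅) : ∀ i j, j ≤ ℓ i → w ≠ A i j := by
  intro i j hj heq
  have hsupp : w ∈ K.support := (h.mem_support w).mpr ⟨i, j, hj, heq⟩
  obtain ⟨y, hy⟩ := hsupp
  have : y ∈ K.neighborSet w := hy
  rw [hw] at this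
  exact this

lemma spider_step_oriented {K : SimpleGraph ℕ} {ℓ A} (hK : SpiderData K ℓ A)
    {i₀ : Fin 3} {j₀ : ℕ} (hj₀ : j₀ < ℓ i₀) {w : ℕ} (hw : K.neighborSet w = ∅) :
    ∃ ℓ' A', SpiderData (SimpleGraph.fromEdgeSet
      ((K.edgeSet \ {s(A i₀ j₀, A i₀ (j₀+1))}) ∪ {s(A i₀ j₀, w), s(w, A i₀ (j₀+1))})) ℓ' A' := by
  obtain ⟨hℓ, hcen, hinj, hadj⟩ := hK
  have hwne := SpiderData.w_ne ⟨hℓ, hcen, hinj, hadj⟩ hw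
  set u := A i₀ j₀ with hu
  set v := A i₀ (j₀+1) with hv
  set ℓ' : Fin 3 → ℕ := fun i => if i = i₀ then ℓ i + 1 else ℓ i with hℓ'def
  set A' : Fin 3 → ℕ → ℕ := fun i j =>
    if i = i₀ then (if j ≤ j₀ then A i j else if j = j₀ + 1 then w else A i (j-1))
    else A i j with hA'def
  have hℓ'ne : ∀ i, i ≠ i₀ → ℓ' i = ℓ i := fun i h => by simp [hℓ'def, h]
  have hℓ'eq : ℓ' i₀ = ℓ i₀ + 1 := by simp [hℓ'def]
  have hA'ne : ∀ i j, i ≠ i₀ → A' i j = A i j := fun i j h => by simp [hA'def, h]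
  have hA'le : ∀ j, j ≤ j₀ → A' i₀ j = A i₀ j := fun j h => by simp [hA'def, h]
  have hA'w : A' i₀ (j₀+1) = w := by simp [hA'def]
  have hA'gt : ∀ j, j₀ + 1 < j → A' i₀ j = A i₀ (j-1) := fun j h => by
    simp only [hA'def, if_pos rfl]
    rw [if_neg (by omega), if_neg (by omega)]
  refine ⟨ℓ', A', ?_, ?_, ?_, ?_⟩
  · intro i
    by_cases h : i = i₀
    · subst h; rw [hℓ'eq]; omega
    · rw [hℓ'ne i h]; exact hℓ i
  · have h0 : ∀ i : Fin 3, A' i 0 = A i 0 := by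
      intro i
      by_cases h : i = i₀
      · subst h; exact hA'le 0 (Nat.zero_le _)
      · exact hA'ne i 0 h
    intro i i'
    rw [h0, h0]
    exact hcen i i'
  -- injectivity
  · have hval : ∀ (i : Fin 3) (j : ℕ), j ≤ ℓ' i →
        ((i = i₀ ∧ j = j₀ + 1) ∧ A' i j = w) ∨
        (∃ k, k ≤ ℓ i ∧ A' i j = A i k ∧
          ((i = i₀ ∧ ((j ≤ j₀ ∧ k = j) ∨ (j₀ + 1 < j ∧ k = j - 1))) ∨ (i ≠ i₀ ∧ k = j))) := by
      intro i j hj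
      by_cases h : i = i₀
      · obtain rfl := h.symm
        rw [hℓ'eq] at hj
        by_cases h1 : j ≤ j₀
        · exact Or.inr ⟨j, by omega, hA'le j h1, Or.inl ⟨rfl, Or.inl ⟨h1, rfl⟩⟩⟩
        · by_cases h2 : j = j₀ + 1
          · exact Or.inl ⟨⟨rfl, h2⟩, h2 ▸ hA'w⟩
          · exact Or.inr ⟨j - 1, by omega, hA'gt j (by omega),
              Or.inl ⟨rfl, Or.inr ⟨by omega, rfl⟩⟩⟩
      · rw [hℓ'ne i h] at hj
        exact Or.inr ⟨j, hj, hA'ne i j h, Or.inr ⟨h, rfl⟩⟩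
    intro i j i' j' hj hj' heq
    rcases hval i j hj with ⟨⟨hi, hjval⟩, hv1⟩ | ⟨k, hk, hv1, hcase1⟩ <;>
      rcases hval i' j' hj' with ⟨⟨hi', hjval'⟩, hv2⟩ | ⟨k', hk', hv2, hcase2⟩
    · exact Or.inl ⟨hi.trans hi'.symm, hjval.trans hjval'.symm⟩
    · exfalso; rw [hv1, hv2] at heq; exact hwne i' k' hk' heq
    · exfalso; rw [hv1, hv2] at heq; exact hwne i k hk heq.symm
    · rw [hv1, hv2] at heq
      rcases hinj i k i' k' hk hk' heq with ⟨hii, hkk⟩ | ⟨hk0, hk0'⟩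
      · subst hii
        rcases hcase1 with ⟨hieq, hc1⟩ | ⟨hine, hc1⟩ <;>
          rcases hcase2 with ⟨hieq', hc2⟩ | ⟨hine', hc2⟩
        · left; exact ⟨rfl, by omega⟩
        · exact absurd hieq hine'
        · exact absurd hieq' hine
        · left; exact ⟨rfl, by omega⟩
      · right
        constructor
        · rcases hcase1 with ⟨_, hc1⟩ | ⟨_, hc1⟩ <;> omega
        · rcases hcase2 with ⟨_, hc2⟩ | ⟨_, hc2⟩ <;> omega
  -- adjacency
  · have hne_uv : ∀ (a b : ℕ) (i : Fin 3) (j : ℕ), j < ℓ i → a = A i j → b = A i (j+1) →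
        ¬(i = i₀ ∧ j = j₀) → s(a, b) ≠ s(u, v) := by
      rintro a b i j hj rfl rfl hne heq
      rw [hu, hv, Sym2.eq_iff] at heq
      rcases heq with ⟨h1, h2⟩ | ⟨h1, h2⟩
      · rcases hinj i j i₀ j₀ (by omega) (by omega) h1 with ⟨hii, hjj⟩ | ⟨hj1, hj2⟩
        · exact hne ⟨hii, hjj⟩
        · rcases hinj i (j+1) i₀ (j₀+1) (by omega) (by omega) h2 with ⟨hii, hjj⟩ | ⟨hj3, hj4⟩
          · exact hne ⟨hii, by omega⟩
          · omega
      · rcases hinj i j i₀ (j₀+1) (by omega) (by omega) h1 with ⟨hii, hjj⟩ | ⟨hj1, hj2⟩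
        · subst hii
          rcases hinj i (j+1) i (j₀) (by omega) (by omega) h2 with ⟨_, hjj'⟩ | ⟨hj3, hj4⟩ <;> omega
        · omega
    have hKmem : ∀ (a b : ℕ) (i : Fin 3) (j : ℕ), j < ℓ i → a = A i j → b = A i (j+1) →
        ¬(i = i₀ ∧ j = j₀) →
        s(a, b) ∈ (K.edgeSet \ {s(u, v)}) ∪ {s(u, w), s(w, v)} ∧ a ≠ b := by
      rintro a b i j hj rfl rfl hne
      refine ⟨Set.mem_union_left _ ⟨?_, ?_⟩, ?_⟩
      · rw [SimpleGraph.mem_edgeSet, hadj]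
        exact ⟨i, j, hj, Or.inl ⟨rfl, rfl⟩⟩
      · exact hne_uv _ _ i j hj rfl rfl hne
      · intro heq
        rcases hinj i j i (j+1) (by omega) (by omega) heq with ⟨_, hjj⟩ | ⟨_, hj2⟩ <;> omega
    have lr : ∀ a b : ℕ, (∃ i j, j < ℓ' i ∧ a = A' i j ∧ b = A' i (j+1)) →
        s(a, b) ∈ (K.edgeSet \ {s(u, v)}) ∪ {s(u, w), s(w, v)} ∧ a ≠ b := by
      rintro a b ⟨i, j, hj, rfl, rfl⟩
      by_cases h : i = i₀
      · obtain rfl := h.symm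
        rw [hℓ'eq] at hj
        rcases Nat.lt_trichotomy j j₀ with hlt | hek | hgt
        · rw [hA'le j (by omega), hA'le (j+1) (by omega)]
          exact hKmem _ _ i₀ j (by omega) rfl rfl (by omega)
        · subst hek
          rw [hA'le j (le_refl _), hA'w]
          refine ⟨Set.mem_union_right _ (Set.mem_insert _ _), fun heq => hwne i₀ j (by omega) heq.symm⟩
        · have hj1 : j₀ + 1 ≤ j := by omega
          by_cases h2 : j = j₀ + 1
          · subst h2
            rw [hA'w, hA'gt (j₀+1+1) (by omega)]
            have : j₀ + 1 + 1 - 1 = j₀ + 1 := by omega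
            rw [this]
            refine ⟨Set.mem_union_right _ ?_, fun heq => hwne i₀ (j₀+1) (by omega) heq⟩
            right; rfl
          · have hgt' : j₀ + 1 < j := by omega
            rw [hA'gt j hgt', hA'gt (j+1) (by omega)]
            have h3 : j + 1 - 1 = (j - 1) + 1 := by omega
            rw [h3]
            exact hKmem _ _ i₀ (j-1) (by omega) rfl rfl (by omega)
      · rw [hA'ne i j h, hA'ne i (j+1) h, hℓ'ne i h] at *
        exact hKmem _ _ i j hj rfl rfl (fun hh => h hh.1)
    intro a b
    rw [SimpleGraph.fromEdgeSet_adj]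
    constructor
    · rintro ⟨hmem, hne⟩
      rcases hmem with ⟨hK', hnuv⟩ | hpair
      · rw [SimpleGraph.mem_edgeSet, hadj] at hK'
        obtain ⟨i, j, hj, hor⟩ := hK'
        have hnej : ¬(i = i₀ ∧ j = j₀) := by
          rintro ⟨hh1, hh2⟩
          apply hnuv
          rw [Set.mem_singleton_iff, hu, hv, ← hh1, ← hh2]
          rcases hor with ⟨rfl, rfl⟩ | ⟨rfl, rfl⟩
          · rfl
          · rw [Sym2.eq_iff]
            right; exact ⟨rfl, rfl⟩
        by_cases h : i = i₀
        · obtain rfl := h.symm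
          rcases Nat.lt_trichotomy j j₀ with hlt | hek | hgt
          · refine ⟨i₀, j, by rw [hℓ'eq]; omega, ?_⟩
            rw [hA'le j (by omega), hA'le (j+1) (by omega)]
            exact hor
          · exact absurd ⟨rfl, hek⟩ hnej
          · refine ⟨i₀, j + 1, by rw [hℓ'eq]; omega, ?_⟩
            rw [hA'gt (j+1) (by omega), hA'gt (j+1+1) (by omega)]
            have e1 : j + 1 - 1 = j := by omega
            have e2 : j + 1 + 1 - 1 = j + 1 := by omega
            rw [e1, e2]
            exact hor
        · refine ⟨i, j, by rw [hℓ'ne i h]; exact hj, ?_⟩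
          rw [hA'ne i j h, hA'ne i (j+1) h]
          exact hor
      · rcases hpair with heq | heq
        · rw [hu, Sym2.eq_iff] at heq
          refine ⟨i₀, j₀, by rw [hℓ'eq]; omega, ?_⟩
          rw [hA'le j₀ (le_refl _), hA'w, ← hu]
          rcases heq with ⟨h1, h2⟩ | ⟨h1, h2⟩
          · exact Or.inl ⟨h1, h2⟩
          · exact Or.inr ⟨h2, h1⟩
        · rw [Set.mem_singleton_iff, hv, Sym2.eq_iff] at heq
          refine ⟨i₀, j₀ + 1, by rw [hℓ'eq]; omega, ?_⟩
          rw [hA'w, hA'gt (j₀+1+1) (by omega)]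
          have e1 : j₀ + 1 + 1 - 1 = j₀ + 1 := by omega
          rw [e1, ← hv]
          rcases heq with ⟨h1, h2⟩ | ⟨h1, h2⟩
          · exact Or.inl ⟨h1, h2⟩
          · exact Or.inr ⟨h2, h1⟩
    · rintro ⟨i, j, hj, hor⟩
      rcases hor with ⟨ha, hb⟩ | ⟨hb, ha⟩
      · exact lr a b ⟨i, j, hj, ha, hb⟩
      · obtain ⟨hmem, hne⟩ := lr b a ⟨i, j, hj, hb, ha⟩
        rw [Sym2.eq_swap (a := b)] at hmem
        exact ⟨hmem, hne.symm⟩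
end SpiderStep

section SpiderAll
open SimpleGraph

lemma pair_swap_sets (E : Set (Sym2 ℕ)) (a b w : ℕ) :
    (E \ {s(b,a)}) ∪ {s(b,w),s(w,a)} = (E \ {s(a,b)}) ∪ {s(a,w),s(w,b)} := by
  rw [Sym2.eq_swap (a := b) (b := a), Set.pair_comm,
    Sym2.eq_swap (a := w) (b := a), Sym2.eq_swap (a := b) (b := w)]

lemma spider_step {K K' : SimpleGraph ℕ} {ℓ A} (hK : SpiderData K ℓ A)
    (h : ElemSubdiv K K') : ∃ ℓ' A', SpiderData K' ℓ' A' := by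
  obtain ⟨u, v, w, huv, hw, hwu, hwv, rfl⟩ := h
  have hadj := hK.2.2.2
  rw [hadj] at huv
  obtain ⟨i, j, hj, hor⟩ := huv
  rcases hor with ⟨rfl, rfl⟩ | ⟨rfl, rfl⟩
  · exact spider_step_oriented hK hj hw
  · rw [pair_swap_sets]
    exact spider_step_oriented hK hj hw

lemma spider_of_subdivision {K : SimpleGraph ℕ} (h : IsSubdivision (starN 3) K) :
    ∃ ℓ A, SpiderData K ℓ A := by
  induction h with
  | refl => exact ⟨_, _, spider_base⟩
  | tail _ hstep ih =>
    obtain ⟨ℓ, A, hK⟩ := ih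
    exact spider_step hK hstep
end SpiderAll

end Helpers

section Components
open SimpleGraph

lemma path_component_embed (H G : SimpleGraph ℕ) (φ : ℕ → Set ℕ)
    (hne : ∀ v, (φ v).Nonempty) (hconn : ∀ v, (G.induce (φ v)).Connected)
    (hdisj : ∀ u v, u ≠ v → Disjoint (φ u) (φ v))
    (hedges : ∀ u v, H.Adj u v → ∃ a ∈ φ u, ∃ b ∈ φ v, G.Adj a b)
    (c : H.ConnectedComponent) (n : ℕ) (e : H.induce c.supp ≃g SimpleGraph.pathGraph (n+1)) :
    ∃ g : ℕ → ℕ,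
      (∀ a b, a ∈ c.supp → b ∈ c.supp → H.Adj a b → G.Adj (g a) (g b)) ∧
      Set.InjOn g c.supp ∧
      (∀ a, a ∈ c.supp → ∃ t ∈ c.supp, g a ∈ φ t) := by
  classical
  set vv : Fin (n+1) → ℕ := fun k => ((e.symm k : ↥c.supp) : ℕ) with hvv
  have hvvmem : ∀ k, vv k ∈ c.supp := fun k => (e.symm k).2
  have hvvinj : Function.Injective vv := fun k l h =>
    e.symm.injective (Subtype.ext h)
  have hvvadj : ∀ k l : Fin (n+1), H.Adj (vv k) (vv l) ↔
      ((k : ℕ) + 1 = l ∨ (l : ℕ) + 1 = k) := by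
    intro k l
    have h1 : H.Adj (vv k) (vv l) ↔ (H.induce c.supp).Adj (e.symm k) (e.symm l) := Iff.rfl
    rw [h1, ← SimpleGraph.Iso.map_adj_iff e, e.apply_symm_apply, e.apply_symm_apply,
      SimpleGraph.pathGraph_adj]
  set B : ℕ → Set ℕ := fun k => φ (vv ⟨min k n, by omega⟩) with hB
  have hBj : ∀ j (hj : j ≤ n), B j = φ (vv ⟨j, by omega⟩) := by
    intro j hj
    have : (⟨min j n, by omega⟩ : Fin (n+1)) = ⟨j, by omega⟩ := Fin.ext (min_eq_left hj)
    rw [hB]; dsimp only; rw [this]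
  have hd : ∀ j j', j ≤ n → j' ≤ n → j ≠ j' → Disjoint (B j) (B j') := by
    intro j j' hj hj' hne'
    rw [hBj j hj, hBj j' hj']
    exact hdisj _ _ (fun h => hne' (by simpa using Fin.mk.injEq .. ▸ (hvvinj h : (⟨j, by omega⟩ : Fin (n+1)) = ⟨j', by omega⟩)))
  have hc : ∀ j, j ≤ n → (G.induce (B j)).Connected := by
    intro j hj; rw [hBj j hj]; exact hconn _
  have he : ∀ j, j < n → ∃ a ∈ B j, ∃ b ∈ B (j+1), G.Adj a b := by
    intro j hj
    rw [hBj j (by omega), hBj (j+1) (by omega)]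
    apply hedges
    rw [hvvadj]
    left; rfl
  obtain ⟨x, hx⟩ := hne (vv ⟨0, by omega⟩)
  have hx0 : x ∈ B 0 := by rw [hBj 0 (by omega)]; exact hx
  obtain ⟨y, p, hp, hyB, hsub, hhit, -⟩ := SimpleGraph.Walk.chain_path B n hc hd he x hx0
  have hlen : n ≤ p.length := SimpleGraph.Walk.le_length_of_hits hp B n hd hhit
  refine ⟨fun a => if h : a ∈ c.supp then p.getVert ((e ⟨a, h⟩ : Fin (n+1)) : ℕ) else 0,
    ?_, ?_, ?_⟩
  · intro a b ha hb hadj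
    simp only [dif_pos ha, dif_pos hb]
    have hab : H.Adj (vv (e ⟨a, ha⟩)) (vv (e ⟨b, hb⟩)) := by
      rw [hvv]; dsimp only
      rw [e.symm_apply_apply, e.symm_apply_apply]
      exact hadj
    rw [hvvadj] at hab
    rcases hab with hlt | hlt
    · have := p.adj_getVert_succ (i := (e ⟨a, ha⟩ : ℕ))
        (by have := (e ⟨b, hb⟩).isLt; omega)
      rwa [hlt] at this
    · have := p.adj_getVert_succ (i := (e ⟨b, hb⟩ : ℕ))
        (by have := (e ⟨a, ha⟩).isLt; omega)
      rw [hlt] at this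
      exact this.symm
  · intro a ha b hb hg
    simp only [dif_pos ha, dif_pos hb] at hg
    have := SimpleGraph.Walk.IsPath.getVert_inj hp
      (by have := (e ⟨a, ha⟩).isLt; omega) (by have := (e ⟨b, hb⟩).isLt; omega) hg
    have h2 : (e ⟨a, ha⟩) = (e ⟨b, hb⟩) := Fin.ext this
    have h3 := e.injective h2
    exact congrArg Subtype.val h3
  · intro a ha
    simp only [dif_pos ha]
    obtain ⟨j, hj, hmem⟩ := hsub _ (SimpleGraph.Walk.getVert_mem_support p _)
    rw [hBj j hj] at hmem
    exact ⟨vv ⟨j, by omega⟩, hvvmem _, hmem⟩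
end Components

section ClawComponent
open SimpleGraph

lemma claw_component_embed (H G : SimpleGraph ℕ) (φ : ℕ → Set ℕ)
    (hne : ∀ v, (φ v).Nonempty) (hconn : ∀ v, (G.induce (φ v)).Connected)
    (hdisj : ∀ u v, u ≠ v → Disjoint (φ u) (φ v))
    (hedges : ∀ u v, H.Adj u v → ∃ a ∈ φ u, ∃ b ∈ φ v, G.Adj a b)
    (c : H.ConnectedComponent) (H' : SimpleGraph ℕ) (ℓ : Fin 3 → ℕ) (A : Fin 3 → ℕ → ℕ)
    (hsp : SpiderData H' ℓ A)
    (e : H.induce c.supp ≃g H'.induce H'.support) :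
    ∃ g : ℕ → ℕ,
      (∀ a b, a ∈ c.supp → b ∈ c.supp → H.Adj a b → G.Adj (g a) (g b)) ∧
      Set.InjOn g c.supp ∧
      (∀ a, a ∈ c.supp → ∃ t ∈ c.supp, g a ∈ φ t) := by
  classical
  obtain ⟨hℓ, hcen, hinj, hadj⟩ := hsp
  have hmemsup : ∀ i j, j ≤ ℓ i → A i j ∈ H'.support := fun i j hj =>
    (SpiderData.mem_support ⟨hℓ, hcen, hinj, hadj⟩ _).mpr ⟨i, j, hj, rfl⟩
  set W : ↥H'.support → ℕ := fun s => ((e.symm s : ↥c.supp) : ℕ) with hW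
  have hWmem : ∀ s, W s ∈ c.supp := fun s => (e.symm s).2
  have hWinj : Function.Injective W := fun s s' h => e.symm.injective (Subtype.ext h)
  have hWadj : ∀ s s', H.Adj (W s) (W s') ↔ H'.Adj ↑s ↑s' := by
    intro s s'
    have h1 : H.Adj (W s) (W s') ↔ (H.induce c.supp).Adj (e.symm s) (e.symm s') := Iff.rfl
    rw [h1, ← SimpleGraph.Iso.map_adj_iff e, e.apply_symm_apply, e.apply_symm_apply]
    exact Iff.rfl
  set WA : Fin 3 → ℕ → ℕ :=
    fun i k => W ⟨A i (min k (ℓ i)), hmemsup i (min k (ℓ i)) (min_le_right _ _)⟩ with hWAdef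
  have hWA : ∀ i k (hk : k ≤ ℓ i), WA i k = W ⟨A i k, hmemsup i k hk⟩ := by
    intro i k hk
    rw [hWAdef]
    have hgen : ∀ (m : ℕ) (hm : m = k) (h1 : A i m ∈ H'.support) (h2 : A i k ∈ H'.support),
        W ⟨A i m, h1⟩ = W ⟨A i k, h2⟩ := by rintro m rfl h1 h2; rfl
    exact hgen _ (min_eq_left hk) _ _
  have hWAmem : ∀ i k, WA i k ∈ c.supp := fun i k => hWmem _
  have hWAinj : ∀ i k i' k', k ≤ ℓ i → k' ≤ ℓ i' → WA i k = WA i' k' → A i k = A i' k' := by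
    intro i k i' k' hk hk' h
    rw [hWA i k hk, hWA i' k' hk'] at h
    exact congrArg Subtype.val (hWinj h)
  have hWAeq : ∀ i k i' k', k ≤ ℓ i → k' ≤ ℓ i' → A i k = A i' k' → WA i k = WA i' k' := by
    intro i k i' k' hk hk' h
    rw [hWA i k hk, hWA i' k' hk']
    exact congrArg W (Subtype.ext h)
  have hcenWA : ∀ i, WA i 0 = WA 0 0 := fun i =>
    hWAeq i 0 0 0 (Nat.zero_le _) (Nat.zero_le _) (hcen i 0)
  have hWadjA : ∀ i j, j < ℓ i → H.Adj (WA i j) (WA i (j+1)) := by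
    intro i j hj
    rw [hWA i j (by omega), hWA i (j+1) (by omega), hWadj]
    exact (hadj _ _).mpr ⟨i, j, hj, Or.inl ⟨rfl, rfl⟩⟩
  set B : Set ℕ := φ (WA 0 0) with hBdef
  set C : Fin 3 → ℕ → Set ℕ := fun i j => φ (WA i (j+1)) with hCdef
  have hBCne : ∀ i j, j < ℓ i → WA 0 0 ≠ WA i (j+1) := by
    intro i j hj h
    have := hWAinj 0 0 i (j+1) (Nat.zero_le _) (by omega) h
    rcases hinj 0 0 i (j+1) (Nat.zero_le _) (by omega) this with ⟨_, h2⟩ | ⟨_, h2⟩ <;> omega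
  have hCCne : ∀ i j i' j', j < ℓ i → j' < ℓ i' → ¬(i = i' ∧ j = j') →
      WA i (j+1) ≠ WA i' (j'+1) := by
    intro i j i' j' hj hj' hnot h
    have := hWAinj i (j+1) i' (j'+1) (by omega) (by omega) h
    rcases hinj i (j+1) i' (j'+1) (by omega) (by omega) this with ⟨h1, h2⟩ | ⟨h1, h2⟩
    · exact hnot ⟨h1, by omega⟩
    · omega
  obtain ⟨x, hxB, y₀, y₁, y₂, A₀, A₁, A₂, hA₀, hA₁, hA₂, hlen₀, hlen₁, hlen₂,
      hsub₀, hsub₁, hsub₂, h01, h02, h12⟩ :=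
    SimpleGraph.Walk.claw_embed (G := G) (B := B) ℓ C hℓ
      (hconn _) (fun i j _ => hconn _)
      (fun i j hj => hdisj _ _ (hBCne i j hj))
      (fun i j i' j' hj hj' hnot => hdisj _ _ (hCCne i j i' j' hj hj' hnot))
      (fun i => hedges _ _ (by have h := hWadjA i 0 (hℓ i); rwa [hcenWA i] at h))
      (fun i j hj => hedges _ _ (hWadjA i (j+1) hj))
  set armget : Fin 3 → ℕ → ℕ :=
    fun i k => if i = 0 then A₀.getVert k else if i = 1 then A₁.getVert k else A₂.getVert k
    with harmdef
  set SupL : Fin 3 → List ℕ :=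
    fun i => if i = 0 then A₀.support else if i = 1 then A₁.support else A₂.support
    with hsupdef
  have hcases : ∀ i : Fin 3, i = 0 ∨ i = 1 ∨ i = 2 := by decide
  have key : ∀ (i : Fin 3) (yi : ℕ) (Ai : G.Walk x yi), armget i = Ai.getVert →
      SupL i = Ai.support → Ai.IsPath → ℓ i ≤ Ai.length →
      (armget i 0 = x) ∧ (∀ k, armget i k ∈ SupL i) ∧
      (∀ k k', k ≤ ℓ i → k' ≤ ℓ i → armget i k = armget i k' → k = k') ∧
      (∀ k, k < ℓ i → G.Adj (armget i k) (armget i (k+1))) := by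
    intro i yi Ai hg hs hp hl
    rw [hg, hs]
    refine ⟨Ai.getVert_zero, fun k => SimpleGraph.Walk.getVert_mem_support Ai k, ?_, ?_⟩
    · intro k k' hk hk' hkk
      exact SimpleGraph.Walk.IsPath.getVert_inj hp (by omega) (by omega) hkk
    · intro k hk
      exact Ai.adj_getVert_succ (by omega)
  have harm0 : armget 0 = A₀.getVert := by
    funext k; rw [harmdef]; dsimp only; rw [if_pos rfl]
  have hsup0 : SupL 0 = A₀.support := by rw [hsupdef]; dsimp only; rw [if_pos rfl]
  have harm1 : armget 1 = A₁.getVert := by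
    funext k; rw [harmdef]; dsimp only
    rw [if_neg (by decide), if_pos rfl]
  have hsup1 : SupL 1 = A₁.support := by
    rw [hsupdef]; dsimp only; rw [if_neg (by decide), if_pos rfl]
  have harm2 : armget 2 = A₂.getVert := by
    funext k; rw [harmdef]; dsimp only
    rw [if_neg (by decide), if_neg (by decide)]
  have hsup2 : SupL 2 = A₂.support := by
    rw [hsupdef]; dsimp only; rw [if_neg (by decide), if_neg (by decide)]
  have K0 := key 0 y₀ A₀ harm0 hsup0 hA₀ hlen₀
  have K1 := key 1 y₁ A₁ harm1 hsup1 hA₁ hlen₁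
  have K2 := key 2 y₂ A₂ harm2 hsup2 hA₂ hlen₂
  have KK : ∀ i : Fin 3, (armget i 0 = x) ∧ (∀ k, armget i k ∈ SupL i) ∧
      (∀ k k', k ≤ ℓ i → k' ≤ ℓ i → armget i k = armget i k' → k = k') ∧
      (∀ k, k < ℓ i → G.Adj (armget i k) (armget i (k+1))) := by
    intro i
    rcases hcases i with rfl | rfl | rfl
    exacts [K0, K1, K2]
  have hA5 : ∀ i : Fin 3, ∀ v ∈ SupL i, v ∈ B ∨ ∃ j, j < ℓ i ∧ v ∈ C i j := by
    intro i
    rcases hcases i with rfl | rfl | rfl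
    · rw [hsup0]; exact hsub₀
    · rw [hsup1]; exact hsub₁
    · rw [hsup2]; exact hsub₂
  have hA6 : ∀ i i' : Fin 3, i ≠ i' → ∀ v, v ∈ SupL i → v ∈ SupL i' → v = x := by
    intro i i' hne' v hv hv'
    rcases hcases i with rfl | rfl | rfl <;> rcases hcases i' with rfl | rfl | rfl <;>
      first
        | exact absurd rfl hne'
        | (rw [hsup0] at *; rw [hsup1] at *; exact h01 v hv hv')
        | (rw [hsup0] at *; rw [hsup2] at *; exact h02 v hv hv')
        | (rw [hsup1] at *; rw [hsup0] at *; exact h01 v hv' hv)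
        | (rw [hsup1] at *; rw [hsup2] at *; exact h12 v hv hv')
        | (rw [hsup2] at *; rw [hsup0] at *; exact h02 v hv' hv)
        | (rw [hsup2] at *; rw [hsup1] at *; exact h12 v hv' hv)
  -- coordinates for each component vertex
  have hsupp_char : ∀ a, a ∈ c.supp → ∃ p : Fin 3 × ℕ, p.2 ≤ ℓ p.1 ∧ a = WA p.1 p.2 := by
    intro a ha
    have hs : ((e ⟨a, ha⟩ : ↥H'.support) : ℕ) ∈ H'.support := (e ⟨a, ha⟩).2
    rw [SpiderData.mem_support ⟨hℓ, hcen, hinj, hadj⟩] at hs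
    obtain ⟨i, j, hj, hval⟩ := hs
    refine ⟨(i, j), hj, ?_⟩
    rw [hWA i j hj, hW]
    dsimp only
    have : (⟨A i j, hmemsup i j hj⟩ : ↥H'.support) = e ⟨a, ha⟩ := Subtype.ext hval.symm
    rw [this, e.symm_apply_apply]
  choose coord hcoord1 hcoord2 using hsupp_char
  set g : ℕ → ℕ := fun a => if h : a ∈ c.supp then
      armget (coord a h).1 (coord a h).2 else 0 with hgdef
  have hgval : ∀ a (ha : a ∈ c.supp) i j, j ≤ ℓ i → a = WA i j →
      g a = armget i j := by
    intro a ha i j hj haw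
    rw [hgdef]
    dsimp only
    rw [dif_pos ha]
    have h1 : A (coord a ha).1 (coord a ha).2 = A i j :=
      hWAinj _ _ _ _ (hcoord1 a ha) hj ((hcoord2 a ha).symm.trans haw)
    rcases hinj _ _ _ _ (hcoord1 a ha) hj h1 with ⟨hii, hjj⟩ | ⟨hj1, hj2⟩
    · rw [hii, hjj]
    · rw [hj1, hj2, (KK _).1, (KK _).1]
  refine ⟨g, ?_, ?_, ?_⟩
  · -- adjacency
    intro a b ha hb hadjab
    have hka := hcoord1 a ha
    have hwa := hcoord2 a ha
    have hkb := hcoord1 b hb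
    have hwb := hcoord2 b hb
    have hadj' : H'.Adj (A (coord a ha).1 (coord a ha).2) (A (coord b hb).1 (coord b hb).2) := by
      rw [← hWadj ⟨_, hmemsup _ _ hka⟩ ⟨_, hmemsup _ _ hkb⟩]
      rw [← hWA _ _ hka, ← hWA _ _ hkb, ← hwa, ← hwb]
      exact hadjab
    rw [hadj _ _] at hadj'
    obtain ⟨i, j, hj, hor⟩ := hadj'
    rcases hor with ⟨h1, h2⟩ | ⟨h1, h2⟩
    · have hga : g a = armget i j :=
        hgval a ha i j (by omega) (hwa.trans (hWAeq _ _ _ _ hka (by omega) h1))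
      have hgb : g b = armget i (j+1) :=
        hgval b hb i (j+1) (by omega) (hwb.trans (hWAeq _ _ _ _ hkb (by omega) h2))
      rw [hga, hgb]
      exact (KK i).2.2.2 j hj
    · have hga : g a = armget i (j+1) :=
        hgval a ha i (j+1) (by omega) (hwa.trans (hWAeq _ _ _ _ hka (by omega) h2))
      have hgb : g b = armget i j :=
        hgval b hb i j (by omega) (hwb.trans (hWAeq _ _ _ _ hkb (by omega) h1))
      rw [hga, hgb]
      exact ((KK i).2.2.2 j hj).symm
  · -- injectivity
    intro a ha b hb hg
    have hga : g a = armget (coord a ha).1 (coord a ha).2 := by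
      rw [hgdef]; dsimp only; rw [dif_pos ha]
    have hgb : g b = armget (coord b hb).1 (coord b hb).2 := by
      rw [hgdef]; dsimp only; rw [dif_pos hb]
    rw [hga, hgb] at hg
    by_cases hii : (coord a ha).1 = (coord b hb).1
    · rw [hii] at hg
      have := (KK _).2.2.1 _ _ (hii ▸ hcoord1 a ha) (hcoord1 b hb) hg
      rw [hcoord2 a ha, hcoord2 b hb, ← hii, ← this]
    · have hxa : armget (coord a ha).1 (coord a ha).2 = x := by
        apply hA6 _ _ hii _ ((KK _).2.1 _)
        rw [hg]; exact (KK _).2.1 _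
      have hxb : armget (coord b hb).1 (coord b hb).2 = x := hg ▸ hxa
      have hka0 : (coord a ha).2 = 0 :=
        (KK _).2.2.1 _ 0 (hcoord1 a ha) (Nat.zero_le _) (hxa.trans ((KK _).1).symm)
      have hkb0 : (coord b hb).2 = 0 :=
        (KK _).2.2.1 _ 0 (hcoord1 b hb) (Nat.zero_le _) (hxb.trans ((KK _).1).symm)
      rw [hcoord2 a ha, hcoord2 b hb, hka0, hkb0, hcenWA]
      exact (hcenWA _).symm
  · -- membership
    intro a ha
    have hga : g a = armget (coord a ha).1 (coord a ha).2 := by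
      rw [hgdef]; dsimp only; rw [dif_pos ha]
    rcases hA5 _ _ ((KK (coord a ha).1).2.1 (coord a ha).2) with hB' | ⟨j, hj, hC⟩
    · exact ⟨WA 0 0, hWAmem 0 0, by rw [hga]; exact hB'⟩
    · exact ⟨WA (coord a ha).1 (j+1), hWAmem _ _, by rw [hga]; exact hC⟩
end ClawComponent

/-- If every connected component of `H` is a path or a subdivision of the claw
`K_{1,3}`, then for every graph `G`, `H` is a minor of `G` if and only if `H`
is a subgraph of `G`. -/
theorem minor_iff_subgraph_of_paths_and_claws (H : SimpleGraph ℕ)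
    (hcomp : ∀ c : H.ConnectedComponent,
      (∃ n : ℕ, Nonempty (H.induce c.supp ≃g SimpleGraph.pathGraph (n + 1))) ∨
      (∃ H' : SimpleGraph ℕ, IsSubdivision (starN 3) H' ∧
        Nonempty (H.induce c.supp ≃g H'.induce H'.support))) :
    ∀ G : SimpleGraph ℕ, MinorOf H G ↔ SubgraphOf H G := by
  intro G
  constructor
  · -- minor → subgraph
    rintro ⟨φ, hne, hconn, hdisj, hedges⟩
    have hcomp' : ∀ c : H.ConnectedComponent, ∃ g : ℕ → ℕ,
        (∀ a b, a ∈ c.supp → b ∈ c.supp → H.Adj a b → G.Adj (g a) (g b)) ∧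
        Set.InjOn g c.supp ∧ (∀ a, a ∈ c.supp → ∃ t ∈ c.supp, g a ∈ φ t) := by
      intro c
      rcases hcomp c with ⟨n, ⟨e⟩⟩ | ⟨H', hsubdiv, ⟨e⟩⟩
      · exact path_component_embed H G φ hne hconn hdisj hedges c n e
      · obtain ⟨ℓ, A, hsp⟩ := spider_of_subdivision hsubdiv
        exact claw_component_embed H G φ hne hconn hdisj hedges c H' ℓ A hsp e
    choose F hF1 hF2 hF3 using hcomp'
    set f : ℕ → ℕ := fun a => F (H.connectedComponentMk a) a with hf
    have hmem : ∀ a : ℕ, a ∈ (H.connectedComponentMk a).supp := by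
      intro a
      rw [SimpleGraph.ConnectedComponent.mem_supp_iff]
    have hfadj : ∀ a b, H.Adj a b → G.Adj (f a) (f b) := by
      intro a b hab
      have hcc : H.connectedComponentMk a = H.connectedComponentMk b :=
        SimpleGraph.ConnectedComponent.sound hab.reachable
      rw [hf]
      dsimp only
      rw [hcc]
      apply hF1 (H.connectedComponentMk b) a b _ (hmem b) hab
      rw [SimpleGraph.ConnectedComponent.mem_supp_iff]
      exact hcc
    have hfinj : Function.Injective f := by
      intro a b hfeq
      rw [hf] at hfeq
      dsimp only at hfeq
      by_cases hcc : H.connectedComponentMk a = H.connectedComponentMk b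
      · rw [hcc] at hfeq
        apply hF2 (H.connectedComponentMk b) _ (hmem b) hfeq
        rw [SimpleGraph.ConnectedComponent.mem_supp_iff]
        exact hcc
      · exfalso
        obtain ⟨t, ht, hmem1⟩ := hF3 _ a (hmem a)
        obtain ⟨t', ht', hmem2⟩ := hF3 _ b (hmem b)
        have htne : t ≠ t' := by
          rintro rfl
          apply hcc
          rw [SimpleGraph.ConnectedComponent.mem_supp_iff] at ht ht'
          rw [← ht, ← ht']
        rw [hfeq] at hmem1
        exact Set.disjoint_left.mp (hdisj t t' htne) hmem1 hmem2
    exact ⟨⟨f, fun h => hfadj _ _ h⟩, hfinj⟩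
  · -- subgraph → minor
    rintro ⟨f, hf⟩
    refine ⟨fun v => {f v}, fun v => ⟨f v, rfl⟩, ?_, ?_, ?_⟩
    · intro v
      rw [SimpleGraph.connected_iff]
      refine ⟨fun x y => ?_, ⟨⟨f v, rfl⟩⟩⟩
      have hx : (x : ℕ) = f v := x.2
      have hy : (y : ℕ) = f v := y.2
      have hxy : x = y := Subtype.ext (hx.trans hy.symm)
      rw [hxy]
    · intro u v huv
      rw [Set.disjoint_singleton]
      exact fun h => huv (hf h)
    · intro u v huv
      exact ⟨f u, rfl, f v, rfl, f.map_adj huv⟩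
end

section
/- Deleting an internal edge (u,v) of a graph G and attaching two new disjoint dangling paths, one at u and one at v, strictly decreases the number of internal edges: if H is the resulting graph, then β(H) < β(G). -/
open SimpleGraph

private lemma cross_parity {V : Type*} [DecidableEq V] {G : SimpleGraph V} {A : Set V} {c : Sym2 V}
    (hc : ∀ x y, G.Adj x y → ((x ∈ A ↔ y ∉ A) ↔ s(x, y) = c)) :
    ∀ {x y : V} (w : G.Walk x y), ((x ∈ A) ↔ (y ∈ A)) ↔ Even (w.edges.count c) := by
  intro x y w
  induction w with
  | nil => simp
  | @cons x m y h w ih =>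
    rw [SimpleGraph.Walk.edges_cons]
    by_cases hxz : s(x, m) = c
    · have h1 : (x ∈ A) ↔ m ∉ A := (hc _ _ h).2 hxz
      rw [hxz, List.count_cons_self, Nat.even_add_one, ← ih]
      tauto
    · have h1 : ¬((x ∈ A) ↔ m ∉ A) := fun hh => hxz ((hc _ _ h).1 hh)
      rw [List.count_cons_of_ne hxz, ← ih]
      tauto

private lemma no_cross_side {V : Type*} {G : SimpleGraph V} {A : Set V} {c : Sym2 V}
    (hc : ∀ x y, G.Adj x y → ((x ∈ A ↔ y ∉ A) ↔ s(x, y) = c)) :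
    ∀ {x y : V} (w : G.Walk x y), c ∉ w.edges → ∀ z ∈ w.support, (z ∈ A ↔ x ∈ A) := by
  intro x y w
  induction w with
  | nil =>
    intro _ z hz
    rw [SimpleGraph.Walk.support_nil, List.mem_singleton] at hz
    subst hz; exact Iff.rfl
  | @cons x m y h w ih =>
    intro hnc z hz
    have hne : s(x, m) ≠ c := fun hh => hnc (by
      rw [SimpleGraph.Walk.edges_cons, ← hh]; exact List.mem_cons_self)
    have hxm : (x ∈ A) ↔ (m ∈ A) := by
      have h2 : ¬ ((x ∈ A) ↔ m ∉ A) := fun hh => hne ((hc _ _ h).1 hh)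
      tauto
    rw [SimpleGraph.Walk.support_cons] at hz
    rcases List.mem_cons.mp hz with rfl | hz'
    · exact Iff.rfl
    · have := ih (fun hcc => hnc (by
        rw [SimpleGraph.Walk.edges_cons]; exact List.mem_cons_of_mem _ hcc)) z hz'
      exact this.trans hxm.symm

private lemma trail_side {V : Type*} [DecidableEq V] {G : SimpleGraph V} {A : Set V} {c : Sym2 V}
    (hc : ∀ x y, G.Adj x y → ((x ∈ A ↔ y ∉ A) ↔ s(x, y) = c))
    {x y : V} (w : G.Walk x y) (ht : w.edges.Nodup) (hxy : (x ∈ A) ↔ (y ∈ A)) :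
    ∀ z ∈ w.support, (z ∈ A ↔ x ∈ A) := by
  have heven := (cross_parity hc w).1 hxy
  have hle := List.nodup_iff_count_le_one.1 ht c
  have h0 : w.edges.count c = 0 := by
    rcases heven with ⟨k, hk⟩; omega
  exact no_cross_side hc w (List.count_eq_zero.1 h0)

private lemma dangling {H : SimpleGraph ℕ} {u : ℕ} {n : ℕ} {p : Fin (n + 1) → ℕ}
    (hp : Function.Injective p) (hu : u ∉ Set.range p)
    (hadj : ∀ x (i : Fin (n + 1)), H.Adj x (p i) →
      (x = u ∧ i = 0) ∨
        ∃ j : Fin (n + 1), ((j : ℕ) = (i : ℕ) + 1 ∨ (i : ℕ) = (j : ℕ) + 1) ∧ x = p j) :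
    (∀ {x : ℕ} (w : H.Walk x x), w.IsCycle → ∀ z ∈ w.support, z ∉ Set.range p) ∧
    (∀ {x y : ℕ} (w : H.Walk x y), w.edges.Nodup → x ∉ Set.range p → y ∉ Set.range p →
      ∀ z ∈ w.support, z ∉ Set.range p) ∧
    (∀ i, (H.neighborSet (p i)).ncard ≤ 2) := by
  classical
  set A : ℕ → Set ℕ := fun k => {z | ∃ i : Fin (n + 1), k ≤ (i : ℕ) ∧ z = p i} with hA
  have hAsub : ∀ k, A k ⊆ Set.range p := by
    rintro k z ⟨i, _, rfl⟩; exact ⟨i, rfl⟩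
  have hmem : ∀ (k : ℕ) (j : Fin (n + 1)), p j ∈ A k ↔ k ≤ (j : ℕ) := by
    intro k j
    constructor
    · rintro ⟨i, hki, hji⟩
      cases hp hji
      exact hki
    · intro h; exact ⟨j, h, rfl⟩
  have hinj : ∀ (i₁ i₂ : Fin (n + 1)), p i₁ = p i₂ ↔ (i₁ : ℕ) = (i₂ : ℕ) := by
    intro i₁ i₂
    constructor
    · intro h; exact congrArg _ (hp h)
    · intro h; exact congrArg p (Fin.ext h)
  have hA0 : A 0 = Set.range p := by
    ext z
    constructor
    · intro h; exact hAsub 0 h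
    · rintro ⟨i, rfl⟩; exact ⟨i, Nat.zero_le _, rfl⟩
  have key : ∀ k : ℕ, k ≤ n → ∃ c : Sym2 ℕ, (∃ i : Fin (n + 1), p i ∈ c) ∧
      ∀ x y, H.Adj x y → ((x ∈ A k ↔ y ∉ A k) ↔ s(x, y) = c) := by
    intro k hk
    have claim : ∃ c : Sym2 ℕ, (∃ i : Fin (n + 1), p i ∈ c) ∧
        ∀ x (i : Fin (n + 1)), H.Adj x (p i) → ((x ∈ A k ↔ p i ∉ A k) ↔ s(x, p i) = c) := by
      cases k with
      | zero =>
        refine ⟨s(u, p 0), ⟨0, by simp⟩, ?_⟩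
        intro x i hxi
        have hpiA : p i ∈ A 0 := ⟨i, Nat.zero_le _, rfl⟩
        rcases hadj x i hxi with ⟨hxu, rfl⟩ | ⟨j, hrel, rfl⟩
        · have hxA : x ∉ A 0 := fun h => hu (hxu ▸ hAsub 0 h)
          rw [Sym2.eq_iff]
          constructor
          · intro _; left; exact ⟨hxu, rfl⟩
          · intro _; tauto
        · have hxA : p j ∈ A 0 := ⟨j, Nat.zero_le _, rfl⟩
          constructor
          · intro hiff; exact absurd hpiA (by tauto)
          · intro hc
            exfalso
            rw [Sym2.eq_iff] at hc
            rcases hc with ⟨h1, _⟩ | ⟨_, h2⟩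
            · exact hu ⟨j, h1⟩
            · exact hu ⟨i, h2⟩
      | succ k' =>
        have hk1 : k' < n + 1 := by omega
        have hk2 : k' + 1 < n + 1 := by omega
        refine ⟨s(p ⟨k', hk1⟩, p ⟨k' + 1, hk2⟩), ⟨⟨k', hk1⟩, by simp⟩, ?_⟩
        intro x i hxi
        rcases hadj x i hxi with ⟨hxu, rfl⟩ | ⟨j, hrel, rfl⟩
        · have hxA : x ∉ A (k' + 1) := fun h => hu (hxu ▸ hAsub _ h)
          have hpA : p (0 : Fin (n + 1)) ∉ A (k' + 1) := by
            rw [hmem]; simp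
          apply iff_of_false
          · tauto
          · intro hc
            rw [Sym2.eq_iff] at hc
            rcases hc with ⟨h1, _⟩ | ⟨h1, _⟩
            · exact hu ⟨_, (hxu.symm.trans h1).symm⟩
            · exact hu ⟨_, (hxu.symm.trans h1).symm⟩
        · rw [hmem, hmem, Sym2.eq_iff, hinj, hinj, hinj, hinj]
          simp only [Fin.val_mk]
          rcases hrel with hj | hj <;> omega
    obtain ⟨c, hcm, hclaim⟩ := claim
    refine ⟨c, hcm, ?_⟩
    intro x y hxy
    by_cases hyp : y ∈ Set.range p
    · obtain ⟨i, rfl⟩ := hyp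
      exact hclaim x i hxy
    · by_cases hxp : x ∈ Set.range p
      · obtain ⟨i, rfl⟩ := hxp
        have h1 := hclaim y i hxy.symm
        rw [show s(p i, y) = s(y, p i) from Sym2.eq_swap, ← h1]
        tauto
      · have hxA : x ∉ A k := fun h => hxp (hAsub _ h)
        have hyA : y ∉ A k := fun h => hyp (hAsub _ h)
        apply iff_of_false
        · tauto
        · intro hc
          obtain ⟨i, hi⟩ := hcm
          rw [← hc, Sym2.mem_iff] at hi
          rcases hi with rfl | rfl
          · exact hxp ⟨i, rfl⟩
          · exact hyp ⟨i, rfl⟩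
  have pathPart : ∀ {x y : ℕ} (w : H.Walk x y), w.edges.Nodup → x ∉ Set.range p →
      y ∉ Set.range p → ∀ z ∈ w.support, z ∉ Set.range p := by
    intro x y w ht hx hy z hz
    obtain ⟨c, _, hc⟩ := key 0 (Nat.zero_le n)
    have hxA : x ∉ A 0 := by rw [hA0]; exact hx
    have hyA : y ∉ A 0 := by rw [hA0]; exact hy
    have := trail_side hc w ht (iff_of_false hxA hyA) z hz
    rw [← hA0]
    tauto
  refine ⟨?_, pathPart, ?_⟩
  · intro x w hcyc z hz
    intro hzp
    obtain ⟨i, rfl⟩ := hzp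
    have ht : w.edges.Nodup := hcyc.isCircuit.isTrail.edges_nodup
    have hside : ∀ k, k ≤ n → ∀ z' ∈ w.support, (z' ∈ A k ↔ x ∈ A k) := by
      intro k hk
      obtain ⟨c, _, hc⟩ := key k hk
      exact trail_side hc w ht Iff.rfl
    have hin : (i : ℕ) ≤ n := by have := i.isLt; omega
    have hxi : x ∈ A (i : ℕ) :=
      (hside (i : ℕ) hin (p i) hz).1 ((hmem _ i).2 le_rfl)
    have hsub : ∀ z' ∈ w.support, z' = p i := by
      intro z' hz'
      have hz'A : z' ∈ A (i : ℕ) := (hside (i : ℕ) hin z' hz').2 hxi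
      obtain ⟨j, hij, rfl⟩ := hz'A
      rw [hinj]
      by_contra hne
      have hlt : (i : ℕ) + 1 ≤ (j : ℕ) := by omega
      have hjn : (i : ℕ) + 1 ≤ n := by have := j.isLt; omega
      have h2 : p j ∈ A ((i : ℕ) + 1) := (hmem _ j).2 hlt
      have h3 : x ∈ A ((i : ℕ) + 1) := (hside _ hjn (p j) hz').1 h2
      have h4 : p i ∈ A ((i : ℕ) + 1) := (hside _ hjn (p i) hz).2 h3
      rw [hmem] at h4
      omega
    cases w with
    | nil => exact hcyc.ne_nil rfl
    | cons h' w' =>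
      rename_i m
      have hxs : x = p i := hsub x (SimpleGraph.Walk.start_mem_support _)
      have hms : m = p i := hsub m (by
        rw [SimpleGraph.Walk.support_cons]
        exact List.mem_cons_of_mem _ (SimpleGraph.Walk.start_mem_support _))
      exact h'.ne (hxs.trans hms.symm)
  · intro i
    have hlt1 : (i : ℕ) - 1 < n + 1 := by have := i.isLt; omega
    have hlt2 : min ((i : ℕ) + 1) n < n + 1 := by omega
    have hsub : H.neighborSet (p i) ⊆
        {(if (i : ℕ) = 0 then u else p ⟨(i : ℕ) - 1, hlt1⟩), p ⟨min ((i : ℕ) + 1) n, hlt2⟩} := by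
      intro x hx
      rcases hadj x i hx.symm with ⟨hxu, rfl⟩ | ⟨j, hrel, rfl⟩
      · refine Set.mem_insert_iff.mpr (Or.inl ?_)
        rw [if_pos (show ((0 : Fin (n + 1)) : ℕ) = 0 by simp)]
        exact hxu
      · rcases hrel with hj | hj
        · refine Set.mem_insert_iff.mpr (Or.inr ?_)
          rw [Set.mem_singleton_iff, hinj]
          have := j.isLt
          simp only [Fin.val_mk]
          omega
        · refine Set.mem_insert_iff.mpr (Or.inl ?_)
          have hi0 : ¬ (i : ℕ) = 0 := by omega
          rw [if_neg hi0, hinj]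
          simp only [Fin.val_mk]
          omega
    calc (H.neighborSet (p i)).ncard
        ≤ ({(if (i : ℕ) = 0 then u else p ⟨(i : ℕ) - 1, hlt1⟩),
            p ⟨min ((i : ℕ) + 1) n, hlt2⟩} : Set ℕ).ncard :=
          Set.ncard_le_ncard hsub (Set.toFinite _)
      _ ≤ ({p ⟨min ((i : ℕ) + 1) n, hlt2⟩} : Set ℕ).ncard + 1 := Set.ncard_insert_le _ _
      _ ≤ 2 := by rw [Set.ncard_singleton]

/-- Deleting an internal edge `(u,v)` of a finite graph `G` and attaching two
new disjoint dangling paths, one at `u` (through the fresh vertices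
`p 0, p 1, …, p a`) and one at `v` (through the fresh vertices
`q 0, q 1, …, q b`), strictly decreases the number of internal edges. -/
theorem beta_lt_of_delete_internal_add_paths (G : SimpleGraph ℕ)
    (hfin : G.edgeSet.Finite) (u v : ℕ) (hint : InternalEdge G s(u, v))
    (a b : ℕ) (p : Fin (a + 1) → ℕ) (q : Fin (b + 1) → ℕ)
    (hp : Function.Injective p) (hq : Function.Injective q)
    (hpq : ∀ i j, p i ≠ q j)
    (hpiso : ∀ i, G.neighborSet (p i) = ∅)
    (hqiso : ∀ i, G.neighborSet (q i) = ∅)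
    (H : SimpleGraph ℕ)
    (hH : H = SimpleGraph.fromEdgeSet ((G.edgeSet \ {s(u, v)})
      ∪ {e | e = s(u, p 0) ∨ ∃ i j : Fin (a + 1), (j : ℕ) = (i : ℕ) + 1 ∧ e = s(p i, p j)}
      ∪ {e | e = s(v, q 0) ∨ ∃ i j : Fin (b + 1), (j : ℕ) = (i : ℕ) + 1 ∧ e = s(q i, q j)})) :
    beta H < beta G := by
  classical
  have huv : G.Adj u v := (SimpleGraph.mem_edgeSet _).mp hint.1
  have hGp : ∀ (i : Fin (a + 1)) (x : ℕ), ¬ G.Adj x (p i) := by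
    intro i x h
    have hmm : x ∈ G.neighborSet (p i) := h.symm
    rw [hpiso i] at hmm
    exact hmm
  have hGq : ∀ (i : Fin (b + 1)) (x : ℕ), ¬ G.Adj x (q i) := by
    intro i x h
    have hmm : x ∈ G.neighborSet (q i) := h.symm
    rw [hqiso i] at hmm
    exact hmm
  have hup : u ∉ Set.range p := by
    rintro ⟨i, hi⟩; exact hGp i v (by rw [hi]; exact huv.symm)
  have huq : u ∉ Set.range q := by
    rintro ⟨i, hi⟩; exact hGq i v (by rw [hi]; exact huv.symm)
  have hvp : v ∉ Set.range p := by
    rintro ⟨i, hi⟩; exact hGp i u (by rw [hi]; exact huv)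
  have hvq : v ∉ Set.range q := by
    rintro ⟨i, hi⟩; exact hGq i u (by rw [hi]; exact huv)
  have hmem' : ∀ x y : ℕ, H.Adj x y ↔
      ((((s(x, y) ∈ G.edgeSet ∧ ¬ s(x, y) = s(u, v)) ∨
        (s(x, y) = s(u, p 0) ∨
          ∃ i j : Fin (a + 1), (j : ℕ) = (i : ℕ) + 1 ∧ s(x, y) = s(p i, p j))) ∨
        (s(x, y) = s(v, q 0) ∨
          ∃ i j : Fin (b + 1), (j : ℕ) = (i : ℕ) + 1 ∧ s(x, y) = s(q i, q j))) ∧ x ≠ y) := by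
    intro x y
    rw [hH, SimpleGraph.fromEdgeSet_adj]
    simp only [Set.mem_union, Set.mem_diff, Set.mem_singleton_iff, Set.mem_setOf_eq]
  have hAdj : ∀ x y : ℕ, H.Adj x y ↔
      (((s(x, y) ∈ G.edgeSet ∧ ¬ s(x, y) = s(u, v)) ∨
        (s(x, y) = s(u, p 0) ∨
          ∃ i j : Fin (a + 1), (j : ℕ) = (i : ℕ) + 1 ∧ s(x, y) = s(p i, p j))) ∨
        (s(x, y) = s(v, q 0) ∨
          ∃ i j : Fin (b + 1), (j : ℕ) = (i : ℕ) + 1 ∧ s(x, y) = s(q i, q j))) := by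
    intro x y
    rw [hmem' x y]
    constructor
    · exact And.left
    · intro hd
      refine ⟨hd, ?_⟩
      rintro rfl
      rcases hd with (⟨hG, _⟩ | (h | ⟨i, j, hij, hs⟩)) | (h | ⟨i, j, hij, hs⟩)
      · exact G.loopless.irrefl x ((SimpleGraph.mem_edgeSet _).mp hG)
      · rw [Sym2.eq_iff] at h
        rcases h with ⟨h1, h2⟩ | ⟨h1, h2⟩
        · exact hup ⟨0, h2.symm.trans h1⟩
        · exact hup ⟨0, h1.symm.trans h2⟩
      · rw [Sym2.eq_iff] at hs
        rcases hs with ⟨h1, h2⟩ | ⟨h1, h2⟩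
        · have h3 : i = j := hp (h1.symm.trans h2)
          rw [h3] at hij; omega
        · have h3 : i = j := hp (h2.symm.trans h1)
          rw [h3] at hij; omega
      · rw [Sym2.eq_iff] at h
        rcases h with ⟨h1, h2⟩ | ⟨h1, h2⟩
        · exact hvq ⟨0, h2.symm.trans h1⟩
        · exact hvq ⟨0, h1.symm.trans h2⟩
      · rw [Sym2.eq_iff] at hs
        rcases hs with ⟨h1, h2⟩ | ⟨h1, h2⟩
        · have h3 : i = j := hq (h1.symm.trans h2)
          rw [h3] at hij; omega
        · have h3 : i = j := hq (h2.symm.trans h1)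
          rw [h3] at hij; omega
  have hadjP : ∀ (x : ℕ) (i : Fin (a + 1)), H.Adj x (p i) →
      (x = u ∧ i = 0) ∨
        ∃ j : Fin (a + 1), ((j : ℕ) = (i : ℕ) + 1 ∨ (i : ℕ) = (j : ℕ) + 1) ∧ x = p j := by
    intro x i h
    rw [hAdj] at h
    rcases h with (⟨hG, _⟩ | (h | ⟨i', j', hij', hs⟩)) | (h | ⟨i', j', hij', hs⟩)
    · exact absurd ((SimpleGraph.mem_edgeSet _).mp hG) (hGp i x)
    · rw [Sym2.eq_iff] at h
      rcases h with ⟨h1, h2⟩ | ⟨h1, h2⟩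
      · exact Or.inl ⟨h1, hp h2⟩
      · exact absurd ⟨i, h2⟩ hup
    · rw [Sym2.eq_iff] at hs
      rcases hs with ⟨h1, h2⟩ | ⟨h1, h2⟩
      · exact Or.inr ⟨i', Or.inr (by rw [hp h2]; exact hij'), h1⟩
      · exact Or.inr ⟨j', Or.inl (by rw [hp h2]; exact hij'), h1⟩
    · rw [Sym2.eq_iff] at h
      rcases h with ⟨h1, h2⟩ | ⟨h1, h2⟩
      · exact absurd h2 (hpq i 0)
      · exact absurd ⟨i, h2⟩ hvp
    · rw [Sym2.eq_iff] at hs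
      rcases hs with ⟨h1, h2⟩ | ⟨h1, h2⟩
      · exact absurd h2 (hpq i j')
      · exact absurd h2 (hpq i i')
  have hadjQ : ∀ (x : ℕ) (i : Fin (b + 1)), H.Adj x (q i) →
      (x = v ∧ i = 0) ∨
        ∃ j : Fin (b + 1), ((j : ℕ) = (i : ℕ) + 1 ∨ (i : ℕ) = (j : ℕ) + 1) ∧ x = q j := by
    intro x i h
    rw [hAdj] at h
    rcases h with (⟨hG, _⟩ | (h | ⟨i', j', hij', hs⟩)) | (h | ⟨i', j', hij', hs⟩)
    · exact absurd ((SimpleGraph.mem_edgeSet _).mp hG) (hGq i x)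
    · rw [Sym2.eq_iff] at h
      rcases h with ⟨h1, h2⟩ | ⟨h1, h2⟩
      · exact absurd h2.symm (hpq 0 i)
      · exact absurd ⟨i, h2⟩ huq
    · rw [Sym2.eq_iff] at hs
      rcases hs with ⟨h1, h2⟩ | ⟨h1, h2⟩
      · exact absurd h2.symm (hpq j' i)
      · exact absurd h2.symm (hpq i' i)
    · rw [Sym2.eq_iff] at h
      rcases h with ⟨h1, h2⟩ | ⟨h1, h2⟩
      · exact Or.inl ⟨h1, hq h2⟩
      · exact absurd ⟨i, h2⟩ hvq
    · rw [Sym2.eq_iff] at hs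
      rcases hs with ⟨h1, h2⟩ | ⟨h1, h2⟩
      · exact Or.inr ⟨i', Or.inr (by rw [hq h2]; exact hij'), h1⟩
      · exact Or.inr ⟨j', Or.inl (by rw [hq h2]; exact hij'), h1⟩
  obtain ⟨cycP, pathP, degP⟩ := dangling hp hup hadjP
  obtain ⟨cycQ, pathQ, degQ⟩ := dangling hq hvq hadjQ
  have oldEdge : ∀ x y : ℕ, H.Adj x y → x ∉ Set.range p → x ∉ Set.range q →
      y ∉ Set.range p → y ∉ Set.range q → s(x, y) ∈ G.edgeSet ∧ s(x, y) ≠ s(u, v) := by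
    intro x y h hxp hxq hyp' hyq
    rw [hAdj] at h
    rcases h with (⟨hG, hne⟩ | (h | ⟨i, j, hij, hs⟩)) | (h | ⟨i, j, hij, hs⟩)
    · exact ⟨hG, hne⟩
    · rw [Sym2.eq_iff] at h
      rcases h with ⟨h1, h2⟩ | ⟨h1, h2⟩
      · exact absurd ⟨0, h2.symm⟩ hyp'
      · exact absurd ⟨0, h1.symm⟩ hxp
    · rw [Sym2.eq_iff] at hs
      rcases hs with ⟨h1, h2⟩ | ⟨h1, h2⟩
      · exact absurd ⟨i, h1.symm⟩ hxp
      · exact absurd ⟨j, h1.symm⟩ hxp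
    · rw [Sym2.eq_iff] at h
      rcases h with ⟨h1, h2⟩ | ⟨h1, h2⟩
      · exact absurd ⟨0, h2.symm⟩ hyq
      · exact absurd ⟨0, h1.symm⟩ hxq
    · rw [Sym2.eq_iff] at hs
      rcases hs with ⟨h1, h2⟩ | ⟨h1, h2⟩
      · exact absurd ⟨i, h1.symm⟩ hxq
      · exact absurd ⟨j, h1.symm⟩ hxq
  have hneH : s(u, v) ∉ H.edgeSet := by
    intro hmm
    have h := (SimpleGraph.mem_edgeSet _).mp hmm
    rw [hAdj] at h
    rcases h with (⟨_, hne⟩ | (h | ⟨i, j, hij, hs⟩)) | (h | ⟨i, j, hij, hs⟩)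
    · exact hne rfl
    · rw [Sym2.eq_iff] at h
      rcases h with ⟨h1, h2⟩ | ⟨h1, h2⟩
      · exact hvp ⟨0, h2.symm⟩
      · exact hup ⟨0, h1.symm⟩
    · rw [Sym2.eq_iff] at hs
      rcases hs with ⟨h1, _⟩ | ⟨h1, _⟩
      · exact hup ⟨i, h1.symm⟩
      · exact hup ⟨j, h1.symm⟩
    · rw [Sym2.eq_iff] at h
      rcases h with ⟨h1, h2⟩ | ⟨h1, h2⟩
      · exact huv.ne h1
      · exact huq ⟨0, h1.symm⟩
    · rw [Sym2.eq_iff] at hs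
      rcases hs with ⟨h1, _⟩ | ⟨h1, _⟩
      · exact huq ⟨i, h1.symm⟩
      · exact huq ⟨j, h1.symm⟩
  have hGfinN : ∀ x : ℕ, (G.neighborSet x).Finite := by
    intro x
    have hpre : G.neighborSet x = (fun y => s(x, y)) ⁻¹' G.edgeSet := by
      ext z
      simp [SimpleGraph.mem_edgeSet]
    rw [hpre]
    apply Set.Finite.preimage ?_ hfin
    intro y1 _ y2 _ hy
    rw [Sym2.eq_iff] at hy
    rcases hy with ⟨_, h2⟩ | ⟨h1, h2⟩
    · exact h2
    · exact h2.trans h1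
  have hdeg : ∀ x : ℕ, x ∉ Set.range p → x ∉ Set.range q → degN H x = degN G x := by
    intro x hxp hxq
    unfold degN
    by_cases hxu : x = u
    · subst hxu
      have hNu : H.neighborSet x = insert (p 0) (G.neighborSet x \ {v}) := by
        ext z
        simp only [SimpleGraph.mem_neighborSet, Set.mem_insert_iff, Set.mem_diff,
          Set.mem_singleton_iff]
        rw [hAdj]
        constructor
        · rintro ((⟨hG, hne⟩ | (h | ⟨i, j, hij, hs⟩)) | (h | ⟨i, j, hij, hs⟩))
          · exact Or.inr ⟨(SimpleGraph.mem_edgeSet _).mp hG, fun hzv => hne (by rw [hzv])⟩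
          · rw [Sym2.eq_iff] at h
            rcases h with ⟨_, h2⟩ | ⟨h1, _⟩
            · exact Or.inl h2
            · exact absurd ⟨0, h1.symm⟩ hxp
          · rw [Sym2.eq_iff] at hs
            rcases hs with ⟨h1, _⟩ | ⟨h1, _⟩
            · exact absurd ⟨i, h1.symm⟩ hxp
            · exact absurd ⟨j, h1.symm⟩ hxp
          · rw [Sym2.eq_iff] at h
            rcases h with ⟨h1, _⟩ | ⟨h1, _⟩
            · exact absurd h1 huv.ne
            · exact absurd ⟨0, h1.symm⟩ hxq
          · rw [Sym2.eq_iff] at hs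
            rcases hs with ⟨h1, _⟩ | ⟨h1, _⟩
            · exact absurd ⟨i, h1.symm⟩ hxq
            · exact absurd ⟨j, h1.symm⟩ hxq
        · rintro (rfl | ⟨hGz, hzv⟩)
          · exact Or.inl (Or.inr (Or.inl rfl))
          · refine Or.inl (Or.inl ⟨(SimpleGraph.mem_edgeSet _).mpr hGz, ?_⟩)
            intro hh
            rw [Sym2.eq_iff] at hh
            rcases hh with ⟨_, h2⟩ | ⟨h1, _⟩
            · exact hzv h2
            · exact huv.ne h1
      have hv' : v ∈ G.neighborSet x := huv
      have hfn := hGfinN x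
      have hp0 : p 0 ∉ G.neighborSet x \ {v} := fun hh => hGp 0 x hh.1
      rw [hNu, Set.ncard_insert_of_notMem hp0 hfn.diff,
        Set.ncard_diff_singleton_of_mem hv']
      have hpos : 0 < (G.neighborSet x).ncard := (Set.ncard_pos hfn).mpr ⟨v, hv'⟩
      omega
    · by_cases hxv : x = v
      · subst hxv
        have hNv : H.neighborSet x = insert (q 0) (G.neighborSet x \ {u}) := by
          ext z
          simp only [SimpleGraph.mem_neighborSet, Set.mem_insert_iff, Set.mem_diff,
            Set.mem_singleton_iff]
          rw [hAdj]
          constructor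
          · rintro ((⟨hG, hne⟩ | (h | ⟨i, j, hij, hs⟩)) | (h | ⟨i, j, hij, hs⟩))
            · refine Or.inr ⟨(SimpleGraph.mem_edgeSet _).mp hG, fun hzu => hne ?_⟩
              rw [hzu]
              exact Sym2.eq_swap
            · rw [Sym2.eq_iff] at h
              rcases h with ⟨h1, _⟩ | ⟨h1, _⟩
              · exact absurd h1.symm huv.ne
              · exact absurd ⟨0, h1.symm⟩ hxp
            · rw [Sym2.eq_iff] at hs
              rcases hs with ⟨h1, _⟩ | ⟨h1, _⟩
              · exact absurd ⟨i, h1.symm⟩ hxp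
              · exact absurd ⟨j, h1.symm⟩ hxp
            · rw [Sym2.eq_iff] at h
              rcases h with ⟨_, h2⟩ | ⟨h1, _⟩
              · exact Or.inl h2
              · exact absurd ⟨0, h1.symm⟩ hxq
            · rw [Sym2.eq_iff] at hs
              rcases hs with ⟨h1, _⟩ | ⟨h1, _⟩
              · exact absurd ⟨i, h1.symm⟩ hxq
              · exact absurd ⟨j, h1.symm⟩ hxq
          · rintro (rfl | ⟨hGz, hzu⟩)
            · exact Or.inr (Or.inl rfl)
            · refine Or.inl (Or.inl ⟨(SimpleGraph.mem_edgeSet _).mpr hGz, ?_⟩)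
              intro hh
              rw [Sym2.eq_iff] at hh
              rcases hh with ⟨h1, _⟩ | ⟨_, h2⟩
              · exact huv.ne h1.symm
              · exact hzu h2
        have hu' : u ∈ G.neighborSet x := huv.symm
        have hfn := hGfinN x
        have hq0 : q 0 ∉ G.neighborSet x \ {u} := fun hh => hGq 0 x hh.1
        rw [hNv, Set.ncard_insert_of_notMem hq0 hfn.diff,
          Set.ncard_diff_singleton_of_mem hu']
        have hpos : 0 < (G.neighborSet x).ncard := (Set.ncard_pos hfn).mpr ⟨u, hu'⟩
        omega
      · have hNx : H.neighborSet x = G.neighborSet x := by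
          ext z
          simp only [SimpleGraph.mem_neighborSet]
          rw [hAdj]
          constructor
          · rintro ((⟨hG, _⟩ | (h | ⟨i, j, hij, hs⟩)) | (h | ⟨i, j, hij, hs⟩))
            · exact (SimpleGraph.mem_edgeSet _).mp hG
            · rw [Sym2.eq_iff] at h
              rcases h with ⟨h1, _⟩ | ⟨h1, _⟩
              · exact absurd h1 hxu
              · exact absurd ⟨0, h1.symm⟩ hxp
            · rw [Sym2.eq_iff] at hs
              rcases hs with ⟨h1, _⟩ | ⟨h1, _⟩
              · exact absurd ⟨i, h1.symm⟩ hxp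
              · exact absurd ⟨j, h1.symm⟩ hxp
            · rw [Sym2.eq_iff] at h
              rcases h with ⟨h1, _⟩ | ⟨h1, _⟩
              · exact absurd h1 hxv
              · exact absurd ⟨0, h1.symm⟩ hxq
            · rw [Sym2.eq_iff] at hs
              rcases hs with ⟨h1, _⟩ | ⟨h1, _⟩
              · exact absurd ⟨i, h1.symm⟩ hxq
              · exact absurd ⟨j, h1.symm⟩ hxq
          · intro hGz
            refine Or.inl (Or.inl ⟨(SimpleGraph.mem_edgeSet _).mpr hGz, ?_⟩)
            intro hh
            rw [Sym2.eq_iff] at hh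
            rcases hh with ⟨h1, _⟩ | ⟨h2, _⟩
            · exact hxu h1
            · exact hxv h2
        rw [hNx]
  have hedgesOld : ∀ {x y : ℕ} (w : H.Walk x y),
      (∀ z ∈ w.support, z ∉ Set.range p) → (∀ z ∈ w.support, z ∉ Set.range q) →
      ∀ e' ∈ w.edges, e' ∈ G.edgeSet ∧ e' ≠ s(u, v) := by
    intro x y w hsP hsQ e' he'
    revert he'
    refine Sym2.ind (fun x1 y1 => ?_) e'
    intro he'
    have hadj' := w.adj_of_mem_edges he'
    have hx1 := w.fst_mem_support_of_mem_edges he'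
    have hy1 := w.snd_mem_support_of_mem_edges he'
    exact oldEdge x1 y1 hadj' (hsP _ hx1) (hsQ _ hx1) (hsP _ hy1) (hsQ _ hy1)
  have hsubInt : {e | InternalEdge H e} ⊆ {e | InternalEdge G e} := by
    rintro e ⟨heH, hwit⟩
    rcases hwit with ⟨x, c, hc, hec⟩ | ⟨x, y, w, hw, hew, hdx, hdy⟩
    · have hsP := cycP c hc
      have hsQ := cycQ c hc
      have hold := hedgesOld c hsP hsQ
      have hginc : ∀ e' ∈ c.edges, e' ∈ G.edgeSet := fun e' he' => (hold e' he').1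
      refine ⟨hginc e hec, Or.inl ⟨x, c.transfer G hginc, hc.transfer hginc, ?_⟩⟩
      rw [SimpleGraph.Walk.edges_transfer]
      exact hec
    · have hxP : x ∉ Set.range p := by
        rintro ⟨i, hi⟩
        have h2 : degN H x ≤ 2 := by rw [← hi]; exact degP i
        omega
      have hxQ : x ∉ Set.range q := by
        rintro ⟨i, hi⟩
        have h2 : degN H x ≤ 2 := by rw [← hi]; exact degQ i
        omega
      have hyP : y ∉ Set.range p := by
        rintro ⟨i, hi⟩
        have h2 : degN H y ≤ 2 := by rw [← hi]; exact degP i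
        omega
      have hyQ : y ∉ Set.range q := by
        rintro ⟨i, hi⟩
        have h2 : degN H y ≤ 2 := by rw [← hi]; exact degQ i
        omega
      have hnd : w.edges.Nodup := hw.isTrail.edges_nodup
      have hsP := pathP w hnd hxP hyP
      have hsQ := pathQ w hnd hxQ hyQ
      have hold := hedgesOld w hsP hsQ
      have hginc : ∀ e' ∈ w.edges, e' ∈ G.edgeSet := fun e' he' => (hold e' he').1
      refine ⟨hginc e hew, Or.inr ⟨x, y, w.transfer G hginc, hw.transfer hginc, ?_, ?_, ?_⟩⟩
      · rw [SimpleGraph.Walk.edges_transfer]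
        exact hew
      · rw [← hdeg x hxP hxQ]
        exact hdx
      · rw [← hdeg y hyP hyQ]
        exact hdy
  have hfinG : {e | InternalEdge G e}.Finite := hfin.subset (fun e he => he.1)
  have hss : {e | InternalEdge H e} ⊂ {e | InternalEdge G e} := by
    rw [Set.ssubset_iff_of_subset hsubInt]
    exact ⟨s(u, v), hint, fun hh => hneH hh.1⟩
  exact Set.ncard_lt_ncard hss hfinG
end
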